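/- arXiv:1906.04672 — 8 statements merged into one kernel-verified Lean document; each statement's English description precedes it below -/
import Mathlib

section
/- Let T be a tournament on 4 vertices and let S = A - Aᵀ be its Seidel adjacency matrix (A the 0-1 adjacency matrix). Then det(S) = 9 if T is a diamond, and det(S) = 1 otherwise. -/
open Finset Matrix

variable {V : Type*} [Fintype V] [DecidableEq V]

/-- A tournament given by a dominance function: `T i j = true` means `i` dominates `j`. -/
def IsTournament (T : V → V → Bool) : Prop :=
  (∀ i, T i i = false) ∧ ∀ i j, i ≠ j → T i j = !T j i

/-- The 0-1 adjacency matrix of a tournament. -/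
def adj (T : V → V → Bool) : Matrix V V ℤ :=
  Matrix.of fun i j => if T i j then 1 else 0

/-- The Seidel adjacency matrix `S = A - Aᵀ` of a tournament. -/
def seidel (T : V → V → Bool) : Matrix V V ℤ :=
  adj T - (adj T)ᵀ

/-- Number of 3-element subsets of `W` inducing a 3-cycle (each vertex dominates
exactly one other vertex of the triple). -/
def numC3On (T : V → V → Bool) (W : Finset V) : ℕ :=
  ((W.powersetCard 3).filter fun t => ∀ v ∈ t, (t.filter fun w => T v w).card = 1).card

/-- Number of 4-element subsets of `W` inducing a diamond, i.e. containing exactly one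
3-element subset that induces a 3-cycle. -/
def numDiamondsOn (T : V → V → Bool) (W : Finset V) : ℕ :=
  ((W.powersetCard 4).filter fun s =>
    ((s.powersetCard 3).filter fun t => ∀ v ∈ t, (t.filter fun w => T v w).card = 1).card
      = 1).card

/-- `δ_T`, the number of 4-element vertex subsets inducing a diamond. -/
def numDiamonds (T : V → V → Bool) : ℕ := numDiamondsOn T Finset.univ

/-- `c₃(T)`, the number of 3-element vertex subsets inducing a 3-cycle. -/
def numC3 (T : V → V → Bool) : ℕ := numC3On T Finset.univ

/-- The determinant of the Seidel adjacency matrix of a 4-tournament is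
`9` if it is a diamond and `1` otherwise. -/
theorem stmt_0 (T : Fin 4 → Fin 4 → Bool) (hT : IsTournament T) :
    (seidel T).det =
      if (((Finset.univ : Finset (Fin 4)).powersetCard 3).filter
            fun t => ∀ v ∈ t, (t.filter fun w => T v w).card = 1).card = 1
      then 9 else 1 := by
  obtain ⟨hd, ha⟩ := hT
  have hTeq : T = fun i j =>
      !![false, T 0 1, T 0 2, T 0 3;
         !(T 0 1), false, T 1 2, T 1 3;
         !(T 0 2), !(T 1 2), false, T 2 3;
         !(T 0 3), !(T 1 3), !(T 2 3), false] i j := by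
    funext i j
    fin_cases i <;> fin_cases j <;>
      simp only [Matrix.cons_val', Matrix.cons_val_zero, Matrix.cons_val_one,
        Matrix.head_cons, Matrix.head_fin_const, Matrix.empty_val',
        Matrix.cons_val_fin_one, Fin.isValue] <;>
      first | rfl | exact hd _ | exact ha _ _ (by decide)
  generalize h1 : T 0 1 = a at hTeq
  generalize h2 : T 0 2 = b at hTeq
  generalize h3 : T 0 3 = c at hTeq
  generalize h4 : T 1 2 = d at hTeq
  generalize h5 : T 1 3 = e at hTeq
  generalize h6 : T 2 3 = f at hTeq
  rw [hTeq]
  clear hTeq hd ha h1 h2 h3 h4 h5 h6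
  cases a <;> cases b <;> cases c <;> cases d <;> cases e <;> cases f <;> decide
end

section
/- Let T be an n-tournament with Seidel adjacency matrix S, and let δ_T be the number of 4-element vertex subsets of T inducing a diamond. Then the sum over all 4-element subsets I of {1,…,n} of the determinant of the 4×4 principal submatrix S[I] equals 8·δ_T + C(n,4). -/
open Finset Matrix

variable {V : Type*} [Fintype V] [DecidableEq V]

/-- The tournament on `Fin 4` determined by six booleans. -/
def mk4 (p q r u v w : Bool) : Fin 4 → Fin 4 → Bool := fun i j =>
  match i, j with
  | 0, 1 => p | 1, 0 => !p
  | 0, 2 => q | 2, 0 => !q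
  | 0, 3 => r | 3, 0 => !r
  | 1, 2 => u | 2, 1 => !u
  | 1, 3 => v | 3, 1 => !v
  | 2, 3 => w | 3, 2 => !w
  | _, _ => false

set_option maxHeartbeats 4000000 in
/-- Determinant/diamond dichotomy for the 64 explicit tournaments on 4 vertices. -/
theorem key4mk (p q r u v w : Bool) :
    (seidel (mk4 p q r u v w)).det = if numC3 (mk4 p q r u v w) = 1 then 9 else 1 := by
  simp only [Matrix.det_succ_row_zero, Fin.sum_univ_succ, Matrix.det_fin_three]
  rcases p <;> rcases q <;> rcases r <;> rcases u <;> rcases v <;> rcases w <;> decide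

theorem eq_mk4 (T : Fin 4 → Fin 4 → Bool) (hT : IsTournament T) :
    T = mk4 (T 0 1) (T 0 2) (T 0 3) (T 1 2) (T 1 3) (T 2 3) := by
  funext i j
  fin_cases i <;> fin_cases j <;>
    first
      | exact hT.1 _
      | rfl
      | exact hT.2 _ _ (by decide)

theorem key4 (T : Fin 4 → Fin 4 → Bool) (hT : IsTournament T) :
    (seidel T).det = if numC3 T = 1 then 9 else 1 := by
  rw [eq_mk4 T hT]
  exact key4mk _ _ _ _ _ _

theorem count_c3_emb {V : Type*} [Fintype V] [DecidableEq V] [LinearOrder V]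
    (T : V → V → Bool) (s : Finset V) (h4 : s.card = 4) :
    ((s.powersetCard 3).filter fun t =>
          ∀ v ∈ t, (t.filter fun w => T v w).card = 1).card
      = numC3 (fun a b => T (s.orderEmbOfFin h4 a) (s.orderEmbOfFin h4 b)) := by
  set e := s.orderEmbOfFin h4 with he
  have hinj : Function.Injective e := e.injective
  have hs : s = Finset.univ.map ⟨e, hinj⟩ := by
    apply Finset.coe_injective
    rw [Finset.coe_map, Finset.coe_univ, Set.image_univ]
    exact (Finset.range_orderEmbOfFin s h4).symm
  rw [hs, Finset.powersetCard_map, Finset.filter_map, Finset.card_map]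
  unfold numC3 numC3On
  congr 1
  have hP : ((fun t => ∀ v ∈ t, (t.filter fun w => T v w).card = 1) ∘
        (Finset.mapEmbedding (⟨e, hinj⟩ : Fin 4 ↪ V)).toEmbedding)
      = fun t => ∀ v ∈ t, (t.filter fun w => T (e v) (e w)).card = 1 := by
    funext t
    simp only [Function.comp_def, RelEmbedding.coe_toEmbedding, Finset.mapEmbedding_apply,
      eq_iff_iff, Finset.forall_mem_map, Finset.filter_map, Finset.card_map,
      Function.Embedding.coeFn_mk]
  simp only [hP]

theorem submatrix_det' {V : Type*} [Fintype V] [DecidableEq V] [LinearOrder V]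
    (T : V → V → Bool) (hT : IsTournament T) (s : Finset V) (h4 : s.card = 4) :
    ((seidel T).submatrix (s.orderEmbOfFin h4) (s.orderEmbOfFin h4)).det
      = if ((s.powersetCard 3).filter fun t =>
          ∀ v ∈ t, (t.filter fun w => T v w).card = 1).card = 1 then 9 else 1 := by
  set e := s.orderEmbOfFin h4 with he
  have hinj : Function.Injective e := e.injective
  have htour : IsTournament (fun a b => T (e a) (e b)) := by
    constructor
    · intro a; exact hT.1 _
    · intro a b hab; exact hT.2 _ _ fun h => hab (hinj h)
  have hmat : (seidel T).submatrix e e = seidel (fun a b => T (e a) (e b)) := by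
    ext a b
    simp [seidel, adj, Matrix.submatrix_apply]
  rw [hmat, key4 _ htour, count_c3_emb T s h4]

/-- The sum of all `4×4` principal minors of the Seidel adjacency matrix of an
`n`-tournament is `8·δ_T + C(n,4)`. -/
theorem stmt_1 {n : ℕ} (T : Fin n → Fin n → Bool) (hT : IsTournament T) :
    ∑ s ∈ ((Finset.univ : Finset (Fin n)).powersetCard 4).attach,
      ((seidel T).submatrix
        (s.1.orderEmbOfFin (Finset.mem_powersetCard.mp s.2).2)
        (s.1.orderEmbOfFin (Finset.mem_powersetCard.mp s.2).2)).det
      = 8 * (numDiamonds T : ℤ) + (n.choose 4 : ℤ) := by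
  have step1 : ∑ s ∈ ((Finset.univ : Finset (Fin n)).powersetCard 4).attach,
      ((seidel T).submatrix
        (s.1.orderEmbOfFin (Finset.mem_powersetCard.mp s.2).2)
        (s.1.orderEmbOfFin (Finset.mem_powersetCard.mp s.2).2)).det
      = ∑ s ∈ ((Finset.univ : Finset (Fin n)).powersetCard 4).attach,
        (if ((s.1.powersetCard 3).filter fun t =>
          ∀ v ∈ t, (t.filter fun w => T v w).card = 1).card = 1 then (9:ℤ) else 1) := by
    refine Finset.sum_congr rfl fun s _ => ?_
    rw [submatrix_det' T hT s.1 (Finset.mem_powersetCard.mp s.2).2]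
    congr
  rw [step1, Finset.sum_attach ((Finset.univ : Finset (Fin n)).powersetCard 4)
    (fun s => if ((s.powersetCard 3).filter fun t =>
          ∀ v ∈ t, (t.filter fun w => T v w).card = 1).card = 1 then (9:ℤ) else 1)]
  have step2 : ∀ s : Finset (Fin n), (if ((s.powersetCard 3).filter fun t =>
          ∀ v ∈ t, (t.filter fun w => T v w).card = 1).card = 1 then (9:ℤ) else 1)
      = (if ((s.powersetCard 3).filter fun t =>
          ∀ v ∈ t, (t.filter fun w => T v w).card = 1).card = 1 then (8:ℤ) else 0) + 1 := by
    intro s; split <;> ring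
  simp only [step2]
  rw [Finset.sum_add_distrib, Finset.sum_const, ← Finset.sum_filter, Finset.sum_const]
  have hdia : (((Finset.univ : Finset (Fin n)).powersetCard 4).filter fun s =>
      ((s.powersetCard 3).filter fun t =>
        ∀ v ∈ t, (t.filter fun w => T v w).card = 1).card = 1).card = numDiamonds T := by
    unfold numDiamonds numDiamondsOn
    congr
    funext s
    congr
  have hcard : ((Finset.univ : Finset (Fin n)).powersetCard 4).card = n.choose 4 := by
    rw [Finset.card_powersetCard, Finset.card_univ, Fintype.card_fin]
  rw [hdia, hcard]

  ring
end

section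
/- Let T be an n-tournament with Seidel adjacency matrix S, let m_{ij} denote the (i,j) entry of S², and let δ_T be the number of 4-element vertex subsets inducing a diamond. Then δ_T = n²(n-1)(n-2)/96 − (1/16)·Σ_{i<j} m_{ij}². -/
open Finset Matrix

variable {V : Type*} [Fintype V] [DecidableEq V]

set_option linter.unusedSectionVars false

namespace Stmt2Proof

def sg (b : Bool) : ℤ := if b then 1 else -1

def cyc3 (x y z : Bool) : Bool := (x && y && z) || (!x && !y && !z)

def diam4 (e1 e2 e3 e4 e5 e6 : Bool) : Bool :=
  (cyc3 e1 e4 (!e2)).toNat + (cyc3 e1 e5 (!e3)).toNat + (cyc3 e2 e6 (!e3)).toNat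
    + (cyc3 e4 e6 (!e5)).toNat == 1

theorem key (e1 e2 e3 e4 e5 e6 : Bool) :
    sg e2 * sg (!e4) * sg e3 * sg (!e5) + sg e1 * sg e4 * sg e3 * sg (!e6)
      + sg e2 * sg e6 * sg e1 * sg e5
    = 1 - 4 * (if diam4 e1 e2 e3 e4 e5 e6 then (1:ℤ) else 0) := by
  revert e1 e2 e3 e4 e5 e6; decide

variable {T : V → V → Bool}

theorem seidel_apply (hT : IsTournament T) {i j : V} (h : i ≠ j) :
    seidel T i j = sg (T i j) := by
  have h2 := hT.2 i j h
  have h3 : T j i = !T i j := by cases hji : T j i <;> rw [hji] at h2 <;> simp [h2]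
  simp only [seidel, Matrix.sub_apply, Matrix.transpose_apply, adj, Matrix.of_apply, sg, h3]
  cases T i j <;> norm_num

theorem seidel_diag (T : V → V → Bool) (i : V) : seidel T i i = 0 := by
  simp [seidel, adj]

theorem seidel_skew (T : V → V → Bool) (i j : V) : seidel T i j = - seidel T j i := by
  simp only [seidel, Matrix.sub_apply, Matrix.transpose_apply, adj, Matrix.of_apply]
  ring

theorem seidel_sq (hT : IsTournament T) (i j : V) :
    (seidel T i j)^2 = if i = j then 0 else 1 := by
  by_cases h : i = j
  · subst h; simp [seidel_diag]
  · rw [seidel_apply hT h, if_neg h]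
    cases T i j <;> norm_num [sg]


/-- injectivity of a quadruple -/
def injQ (q : V × V × V × V) : Prop :=
  q.1 ≠ q.2.1 ∧ q.1 ≠ q.2.2.1 ∧ q.1 ≠ q.2.2.2 ∧ q.2.1 ≠ q.2.2.1 ∧ q.2.1 ≠ q.2.2.2
    ∧ q.2.2.1 ≠ q.2.2.2

instance : DecidablePred (injQ (V := V)) := fun q => by unfold injQ; infer_instance

def qset (q : V × V × V × V) : Finset V := {q.1, q.2.1, q.2.2.1, q.2.2.2}

theorem qset_card {q : V × V × V × V} (h : injQ q) : (qset q).card = 4 := by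
  obtain ⟨h1, h2, h3, h4, h5, h6⟩ := h
  rw [qset, card_insert_of_notMem (by simp [h1, h2, h3]),
    card_insert_of_notMem (by simp [h4, h5]), card_insert_of_notMem (by simp [h6]),
    card_singleton]

theorem count_ne (i : V) : ∑ k : V, (if k ≠ i then (1:ℤ) else 0) = (Fintype.card V : ℤ) - 1 := by
  have : ∀ k : V, (if k ≠ i then (1:ℤ) else 0) = 1 - (if k = i then (1:ℤ) else 0) := by
    intro k; split_ifs <;> simp_all
  simp_rw [this]
  rw [Finset.sum_sub_distrib, Finset.sum_const, Finset.sum_ite_eq' univ i (fun _ => (1:ℤ))]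
  simp [Finset.card_univ]

theorem count_ne2 {i j : V} (h : i ≠ j) :
    ∑ k : V, (if k ≠ i ∧ k ≠ j then (1:ℤ) else 0) = (Fintype.card V : ℤ) - 2 := by
  have : ∀ k : V, (if k ≠ i ∧ k ≠ j then (1:ℤ) else 0)
      = 1 - (if k = i then (1:ℤ) else 0) - (if k = j then (1:ℤ) else 0) := by
    intro k; split_ifs <;> simp_all
  simp_rw [this]
  rw [Finset.sum_sub_distrib, Finset.sum_sub_distrib, Finset.sum_const,
    Finset.sum_ite_eq' univ i (fun _ => (1:ℤ)), Finset.sum_ite_eq' univ j (fun _ => (1:ℤ))]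
  simp [Finset.card_univ]; ring

theorem sum_seidel_sq (hT : IsTournament T) (i : V) :
    ∑ k : V, (seidel T i k)^2 = (Fintype.card V : ℤ) - 1 := by
  rw [← count_ne i]
  refine Finset.sum_congr rfl fun k _ => ?_
  rw [seidel_sq hT]
  by_cases h : i = k <;> simp [h, Ne.symm, ne_comm]

theorem m_diag (hT : IsTournament T) (i : V) :
    ∑ k : V, seidel T i k * seidel T k i = -((Fintype.card V : ℤ) - 1) := by
  rw [← sum_seidel_sq hT i, ← Finset.sum_neg_distrib]
  refine Finset.sum_congr rfl fun k _ => ?_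
  rw [seidel_skew T k i]; ring


/-- the quadruple summand -/
def pfun (T : V → V → Bool) (q : V × V × V × V) : ℤ :=
  seidel T q.1 q.2.2.1 * seidel T q.2.2.1 q.2.1 * seidel T q.1 q.2.2.2
    * seidel T q.2.2.2 q.2.1

theorem stepA (T : V → V → Bool) :
    ∑ p : V × V, ((seidel T ^ 2) p.1 p.2)^2 = ∑ q : V × V × V × V, pfun T q := by
  rw [Fintype.sum_prod_type, Fintype.sum_prod_type]
  refine Finset.sum_congr rfl fun i _ => ?_
  rw [Fintype.sum_prod_type]
  refine Finset.sum_congr rfl fun j _ => ?_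
  have hm : (seidel T ^ 2) i j = ∑ k, seidel T i k * seidel T k j := by
    rw [sq, Matrix.mul_apply]
  rw [hm, sq, Finset.sum_mul_sum, Fintype.sum_prod_type]
  refine Finset.sum_congr rfl fun k _ => ?_
  refine Finset.sum_congr rfl fun l _ => ?_
  simp only [pfun]
  ring

theorem split_pointwise (hT : IsTournament T) (i j k l : V) :
    seidel T i k * seidel T k j * seidel T i l * seidel T l j
    = (if injQ (i, j, k, l) then
        seidel T i k * seidel T k j * seidel T i l * seidel T l j else 0)
      + (if i = j ∧ k ≠ i ∧ l ≠ i then 1 else 0)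
      + (if i ≠ j ∧ k = l ∧ k ≠ i ∧ k ≠ j then 1 else 0) := by
  by_cases hij : i = j
  · subst hij
    have h1 : ¬ injQ (i, i, k, l) := by simp [injQ]
    have h3 : ¬(i ≠ i ∧ k = l ∧ k ≠ i ∧ k ≠ i) := by tauto
    rw [if_neg h1, if_neg h3]
    have he : seidel T i k * seidel T k i * seidel T i l * seidel T l i
        = (seidel T i k)^2 * (seidel T i l)^2 := by
      rw [seidel_skew T k i, seidel_skew T l i]; ring
    rw [he, seidel_sq hT, seidel_sq hT]
    by_cases hk : i = k
    · subst hk; simp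
    · by_cases hl : i = l
      · subst hl; simp
      · rw [if_neg hk, if_neg hl,
          if_pos (show i = i ∧ k ≠ i ∧ l ≠ i from ⟨rfl, Ne.symm hk, Ne.symm hl⟩)]
        ring
  · by_cases hki : k = i
    · subst hki
      rw [seidel_diag]
      simp [injQ, hij]
    · by_cases hkj : k = j
      · subst hkj
        rw [seidel_diag]
        simp [injQ, hij, hki]
      · by_cases hli : l = i
        · subst hli
          rw [seidel_diag]
          simp [injQ, hij, hki, hkj]
        · by_cases hlj : l = j
          · subst hlj
            rw [seidel_diag]
            simp [injQ, hij, hki, hkj, hli]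
          · by_cases hkl : k = l
            · subst hkl
              rw [if_neg (by simp [injQ]), if_neg (by tauto),
                if_pos ⟨hij, rfl, hki, hkj⟩]
              have he : seidel T i k * seidel T k j * seidel T i k * seidel T k j
                  = (seidel T i k)^2 * (seidel T k j)^2 := by ring
              rw [he, seidel_sq hT, seidel_sq hT, if_neg (Ne.symm hki), if_neg hkj]
              ring
            · rw [if_pos ⟨hij, Ne.symm hki, Ne.symm hli, Ne.symm hkj, Ne.symm hlj, hkl⟩,
                if_neg (by tauto), if_neg (by tauto)]
              ring


theorem countC1 :
    ∑ q : V × V × V × V,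
      (if q.1 = q.2.1 ∧ q.2.2.1 ≠ q.1 ∧ q.2.2.2 ≠ q.1 then (1:ℤ) else 0)
    = (Fintype.card V : ℤ) * ((Fintype.card V : ℤ) - 1)^2 := by
  rw [Fintype.sum_prod_type]
  have hrow : ∀ i : V, ∑ r : V × V × V,
      (if i = r.1 ∧ r.2.1 ≠ i ∧ r.2.2 ≠ i then (1:ℤ) else 0)
      = ((Fintype.card V : ℤ) - 1)^2 := by
    intro i
    rw [Fintype.sum_prod_type]
    have hj : ∀ j : V, ∑ r : V × V, (if i = j ∧ r.1 ≠ i ∧ r.2 ≠ i then (1:ℤ) else 0)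
        = if i = j then ((Fintype.card V : ℤ) - 1)^2 else 0 := by
      intro j
      by_cases hij : i = j
      · rw [if_pos hij, Fintype.sum_prod_type]
        have : ∀ k : V, ∑ l : V, (if i = j ∧ k ≠ i ∧ l ≠ i then (1:ℤ) else 0)
            = (if k ≠ i then (1:ℤ) else 0) * ((Fintype.card V : ℤ) - 1) := by
          intro k
          by_cases hk : k ≠ i
          · rw [if_pos hk, one_mul, ← count_ne i]
            refine Finset.sum_congr rfl fun l _ => ?_
            by_cases hl : l ≠ i
            · rw [if_pos ⟨hij, hk, hl⟩, if_pos hl]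
            · rw [if_neg (by tauto), if_neg hl]
          · rw [if_neg hk]
            simp only [zero_mul]
            refine Finset.sum_eq_zero fun l _ => ?_
            simp [hk]
        simp_rw [this]
        rw [← Finset.sum_mul, count_ne i, sq]
      · rw [if_neg hij]
        refine Finset.sum_eq_zero fun r _ => by simp [hij]
    simp_rw [hj]
    rw [Finset.sum_ite_eq univ i (fun _ => ((Fintype.card V : ℤ) - 1)^2)]
    simp
  simp_rw [hrow]
  rw [Finset.sum_const, Finset.card_univ]
  simp [mul_comm]

theorem countC2 :
    ∑ q : V × V × V × V,
      (if q.1 ≠ q.2.1 ∧ q.2.2.1 = q.2.2.2 ∧ q.2.2.1 ≠ q.1 ∧ q.2.2.1 ≠ q.2.1 then (1:ℤ) else 0)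
    = (Fintype.card V : ℤ) * ((Fintype.card V : ℤ) - 1) * ((Fintype.card V : ℤ) - 2) := by
  rw [Fintype.sum_prod_type]
  have hrow : ∀ i : V, ∑ r : V × V × V,
      (if i ≠ r.1 ∧ r.2.1 = r.2.2 ∧ r.2.1 ≠ i ∧ r.2.1 ≠ r.1 then (1:ℤ) else 0)
      = ((Fintype.card V : ℤ) - 1) * ((Fintype.card V : ℤ) - 2) := by
    intro i
    rw [Fintype.sum_prod_type]
    have hj : ∀ j : V, ∑ r : V × V, (if i ≠ j ∧ r.1 = r.2 ∧ r.1 ≠ i ∧ r.1 ≠ j then (1:ℤ) else 0)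
        = if j ≠ i then ((Fintype.card V : ℤ) - 2) else 0 := by
      intro j
      by_cases hij : i = j
      · rw [if_neg (by simp [hij])]
        refine Finset.sum_eq_zero fun r _ => by simp [hij]
      · rw [if_pos (Ne.symm hij), Fintype.sum_prod_type]
        have : ∀ k : V, ∑ l : V, (if i ≠ j ∧ k = l ∧ k ≠ i ∧ k ≠ j then (1:ℤ) else 0)
            = if k ≠ i ∧ k ≠ j then (1:ℤ) else 0 := by
          intro k
          by_cases hk : k ≠ i ∧ k ≠ j
          · rw [if_pos hk]
            have : ∀ l : V, (if i ≠ j ∧ k = l ∧ k ≠ i ∧ k ≠ j then (1:ℤ) else 0)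
                = if k = l then (1:ℤ) else 0 := by
              intro l
              by_cases hkl : k = l
              · rw [if_pos ⟨hij, hkl, hk.1, hk.2⟩, if_pos hkl]
              · rw [if_neg (by tauto), if_neg hkl]
            simp_rw [this]
            rw [Finset.sum_ite_eq univ k (fun _ => (1:ℤ))]
            simp
          · rw [if_neg hk]
            refine Finset.sum_eq_zero fun l _ => by
              rw [if_neg (by tauto)]
        simp_rw [this]
        exact count_ne2 hij
    simp_rw [hj]
    have hC : ∀ j : V, (if j ≠ i then ((Fintype.card V : ℤ) - 2) else 0)
        = ((Fintype.card V : ℤ) - 2) * (if j ≠ i then (1:ℤ) else 0) := by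
      intro j; split_ifs <;> ring
    simp_rw [hC]
    rw [← Finset.mul_sum, count_ne i]
    ring
  simp_rw [hrow]
  rw [Finset.sum_const, Finset.card_univ]
  ring


theorem stepB (hT : IsTournament T) :
    ∑ q : V × V × V × V, pfun T q
    = (∑ q ∈ univ.filter injQ, pfun T q)
      + (Fintype.card V : ℤ) * ((Fintype.card V : ℤ) - 1)^2
      + (Fintype.card V : ℤ) * ((Fintype.card V : ℤ) - 1) * ((Fintype.card V : ℤ) - 2) := by
  have h : ∀ q : V × V × V × V, pfun T q
      = (if injQ q then pfun T q else 0)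
        + (if q.1 = q.2.1 ∧ q.2.2.1 ≠ q.1 ∧ q.2.2.2 ≠ q.1 then (1:ℤ) else 0)
        + (if q.1 ≠ q.2.1 ∧ q.2.2.1 = q.2.2.2 ∧ q.2.2.1 ≠ q.1 ∧ q.2.2.1 ≠ q.2.1 then (1:ℤ)
            else 0) := by
    intro q
    exact split_pointwise hT q.1 q.2.1 q.2.2.1 q.2.2.2
  rw [Finset.sum_congr rfl fun q _ => h q, Finset.sum_add_distrib, Finset.sum_add_distrib,
    countC1, countC2, ← Finset.sum_filter]

def swap23 : (V × V × V × V) ≃ (V × V × V × V) where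
  toFun q := (q.1, q.2.2.1, q.2.1, q.2.2.2)
  invFun q := (q.1, q.2.2.1, q.2.1, q.2.2.2)
  left_inv q := rfl
  right_inv q := rfl

def swap24 : (V × V × V × V) ≃ (V × V × V × V) where
  toFun q := (q.1, q.2.2.2, q.2.2.1, q.2.1)
  invFun q := (q.1, q.2.2.2, q.2.2.1, q.2.1)
  left_inv q := rfl
  right_inv q := rfl

theorem injQ_swap23 (q : V × V × V × V) : injQ (swap23 q) ↔ injQ q := by
  obtain ⟨i, j, k, l⟩ := q
  constructor
  · rintro ⟨h1, h2, h3, h4, h5, h6⟩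
    exact ⟨h2, h1, h3, h4.symm, h6, h5⟩
  · rintro ⟨h1, h2, h3, h4, h5, h6⟩
    exact ⟨h2, h1, h3, h4.symm, h6, h5⟩

theorem injQ_swap24 (q : V × V × V × V) : injQ (swap24 q) ↔ injQ q := by
  obtain ⟨i, j, k, l⟩ := q
  constructor
  · rintro ⟨h1, h2, h3, h4, h5, h6⟩
    exact ⟨h3, h2, h1, h6.symm, h5.symm, h4.symm⟩
  · rintro ⟨h1, h2, h3, h4, h5, h6⟩
    exact ⟨h3, h2, h1, h6.symm, h5.symm, h4.symm⟩

theorem stepC (T : V → V → Bool) :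
    ∑ q ∈ univ.filter injQ, (pfun T q + pfun T (swap23 q) + pfun T (swap24 q))
    = 3 * ∑ q ∈ univ.filter injQ, pfun T q := by
  rw [Finset.sum_add_distrib, Finset.sum_add_distrib]
  have h23 : ∑ q ∈ univ.filter injQ, pfun T (swap23 q) = ∑ q ∈ univ.filter injQ, pfun T q := by
    refine Finset.sum_equiv swap23 (fun q => ?_) (fun q _ => rfl)
    simp [Finset.mem_filter, injQ_swap23]
  have h24 : ∑ q ∈ univ.filter injQ, pfun T (swap24 q) = ∑ q ∈ univ.filter injQ, pfun T q := by
    refine Finset.sum_equiv swap24 (fun q => ?_) (fun q _ => rfl)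
    simp [Finset.mem_filter, injQ_swap24]
  rw [h23, h24]; ring

/-- the integer diamond indicator of a quadruple -/
def dtz (T : V → V → Bool) (q : V × V × V × V) : ℤ :=
  if diam4 (T q.1 q.2.1) (T q.1 q.2.2.1) (T q.1 q.2.2.2) (T q.2.1 q.2.2.1)
      (T q.2.1 q.2.2.2) (T q.2.2.1 q.2.2.2) then 1 else 0

theorem stepD (hT : IsTournament T) {q : V × V × V × V} (hq : injQ q) :
    pfun T q + pfun T (swap23 q) + pfun T (swap24 q) = 1 - 4 * dtz T q := by
  obtain ⟨i, j, k, l⟩ := q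
  obtain ⟨h1, h2, h3, h4, h5, h6⟩ := hq
  show seidel T i k * seidel T k j * seidel T i l * seidel T l j
      + (seidel T i j * seidel T j k * seidel T i l * seidel T l k)
      + (seidel T i k * seidel T k l * seidel T i j * seidel T j l) = _
  rw [seidel_apply hT h2, seidel_apply hT (Ne.symm h4), seidel_apply hT h3,
    seidel_apply hT (Ne.symm h5), seidel_apply hT h1, seidel_apply hT h4,
    seidel_apply hT (Ne.symm h6), seidel_apply hT h6, seidel_apply hT h5]
  rw [hT.2 k j (Ne.symm h4), hT.2 l j (Ne.symm h5), hT.2 l k (Ne.symm h6)]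
  exact key (T i j) (T i k) (T i l) (T j k) (T j l) (T k l)


theorem card_inj4 (s : Finset V) :
    (univ.filter fun q : V × V × V × V =>
      (q.1 ∈ s ∧ q.2.1 ∈ s ∧ q.2.2.1 ∈ s ∧ q.2.2.2 ∈ s) ∧ injQ q).card
    = s.card.descFactorial 4 := by
  rw [show s.card.descFactorial 4 = Fintype.card (Fin 4 ↪ {x // x ∈ s}) by
    rw [Fintype.card_embedding_eq, Fintype.card_coe, Fintype.card_fin]]
  rw [← Finset.card_univ]
  refine Finset.card_bij'
    (fun q hq => ⟨![⟨q.1, ?_⟩, ⟨q.2.1, ?_⟩, ⟨q.2.2.1, ?_⟩, ⟨q.2.2.2, ?_⟩], ?_⟩)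
    (fun f _ => ((f 0 : V), (f 1 : V), (f 2 : V), (f 3 : V))) ?_ ?_ ?_ ?_
  · exact (Finset.mem_filter.mp hq).2.1.1
  · exact (Finset.mem_filter.mp hq).2.1.2.1
  · exact (Finset.mem_filter.mp hq).2.1.2.2.1
  · exact (Finset.mem_filter.mp hq).2.1.2.2.2
  · obtain ⟨-, h1, h2, h3, h4, h5, h6⟩ := (Finset.mem_filter.mp hq).2
    intro u v huv
    fin_cases u <;> fin_cases v <;> simp_all [Subtype.ext_iff] <;>
      first
      | exact h1 huv.symm
      | exact h2 huv.symm
      | exact h3 huv.symm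
      | exact h4 huv.symm
      | exact h5 huv.symm
      | exact h6 huv.symm
  · intro q hq; exact Finset.mem_univ _
  · intro f _
    rw [Finset.mem_filter]
    refine ⟨Finset.mem_univ _, ⟨(f 0).2, (f 1).2, (f 2).2, (f 3).2⟩, ?_⟩
    have hne : ∀ u v : Fin 4, u ≠ v → ((f u : V) ≠ (f v : V)) := by
      intro u v huv h
      exact huv (f.injective (Subtype.ext h))
    exact ⟨hne 0 1 (by decide), hne 0 2 (by decide), hne 0 3 (by decide),
      hne 1 2 (by decide), hne 1 3 (by decide), hne 2 3 (by decide)⟩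
  · intro q hq; rfl
  · intro f hf
    apply DFunLike.ext
    intro u
    fin_cases u <;> rfl


theorem card_filter_three {α : Type*} [DecidableEq α] {a b c : α} (hab : a ≠ b) (hac : a ≠ c)
    (hbc : b ≠ c) (p : α → Prop) [DecidablePred p] :
    (({a, b, c} : Finset α).filter p).card
    = (if p a then 1 else 0) + (if p b then 1 else 0) + (if p c then 1 else 0) := by
  rw [Finset.card_filter, Finset.sum_insert (by simp [hab, hac]),
    Finset.sum_insert (by simp [hbc]), Finset.sum_singleton, ← add_assoc]

theorem card_filter_four {α : Type*} [DecidableEq α] {a b c d : α} (hab : a ≠ b) (hac : a ≠ c)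
    (had : a ≠ d) (hbc : b ≠ c) (hbd : b ≠ d) (hcd : c ≠ d) (p : α → Prop) [DecidablePred p] :
    (({a, b, c, d} : Finset α).filter p).card
    = (if p a then 1 else 0) + (if p b then 1 else 0) + (if p c then 1 else 0)
      + (if p d then 1 else 0) := by
  rw [Finset.card_filter, Finset.sum_insert (by simp [hab, hac, had]),
    Finset.sum_insert (by simp [hbc, hbd]), Finset.sum_insert (by simp [hcd]),
    Finset.sum_singleton, ← add_assoc, ← add_assoc]

theorem cyc_triple (hT : IsTournament T) {a b c : V} (hab : a ≠ b) (hac : a ≠ c) (hbc : b ≠ c) :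
    (∀ v ∈ ({a, b, c} : Finset V), (({a, b, c} : Finset V).filter fun w => T v w).card = 1)
    ↔ cyc3 (T a b) (T b c) (!(T a c)) = true := by
  have hcard : ∀ v : V, (({a, b, c} : Finset V).filter fun w => T v w).card
      = (if T v a then 1 else 0) + (if T v b then 1 else 0) + (if T v c then 1 else 0) :=
    fun v => card_filter_three hab hac hbc _
  simp only [Finset.mem_insert, Finset.mem_singleton, forall_eq_or_imp, forall_eq]
  rw [hcard a, hcard b, hcard c, hT.1 a, hT.1 b, hT.1 c,
    hT.2 b a (Ne.symm hab), hT.2 c a (Ne.symm hac), hT.2 c b (Ne.symm hbc)]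
  cases T a b <;> cases T a c <;> cases T b c <;> simp [cyc3]

theorem quad_powerset {a b c d : V} (hab : a ≠ b) (hac : a ≠ c) (had : a ≠ d) (hbc : b ≠ c)
    (hbd : b ≠ d) (hcd : c ≠ d) (t : Finset V) :
    t ∈ ({a, b, c, d} : Finset V).powersetCard 3
    ↔ (t = {a, b, c} ∨ t = {a, b, d} ∨ t = {a, c, d} ∨ t = {b, c, d}) := by
  rw [Finset.mem_powersetCard]
  constructor
  · rintro ⟨hsub, hcardt⟩
    have hcs : ({a, b, c, d} : Finset V).card = 4 := by
      rw [Finset.card_insert_of_notMem (by simp [hab, hac, had]),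
        Finset.card_insert_of_notMem (by simp [hbc, hbd]),
        Finset.card_insert_of_notMem (by simp [hcd]), Finset.card_singleton]
    have h1 : (({a, b, c, d} : Finset V) \ t).card = 1 := by
      rw [Finset.card_sdiff_of_subset hsub, hcs, hcardt]
    obtain ⟨x, hx⟩ := Finset.card_eq_one.mp h1
    have hxt : t = ({a, b, c, d} : Finset V) \ {x} := by
      rw [← hx, Finset.sdiff_sdiff_eq_self hsub]
    have hxmem : x ∈ ({a, b, c, d} : Finset V) := by
      have : x ∈ ({a, b, c, d} : Finset V) \ t := hx ▸ Finset.mem_singleton_self x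
      exact (Finset.mem_sdiff.mp this).1
    simp only [Finset.mem_insert, Finset.mem_singleton] at hxmem
    rcases hxmem with rfl | rfl | rfl | rfl
    · refine Or.inr (Or.inr (Or.inr ?_))
      rw [hxt]; ext y
      simp only [Finset.mem_sdiff, Finset.mem_insert, Finset.mem_singleton]
      constructor
      · rintro ⟨h, hy⟩; tauto
      · rintro (rfl | rfl | rfl) <;>
        · exact ⟨by tauto, by intro h; subst h; tauto⟩
    · refine Or.inr (Or.inr (Or.inl ?_))
      rw [hxt]; ext y
      simp only [Finset.mem_sdiff, Finset.mem_insert, Finset.mem_singleton]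
      constructor
      · rintro ⟨h, hy⟩; tauto
      · rintro (rfl | rfl | rfl) <;>
        · exact ⟨by tauto, by intro h; subst h; tauto⟩
    · refine Or.inr (Or.inl ?_)
      rw [hxt]; ext y
      simp only [Finset.mem_sdiff, Finset.mem_insert, Finset.mem_singleton]
      constructor
      · rintro ⟨h, hy⟩; tauto
      · rintro (rfl | rfl | rfl) <;>
        · exact ⟨by tauto, by intro h; subst h; tauto⟩
    · refine Or.inl ?_
      rw [hxt]; ext y
      simp only [Finset.mem_sdiff, Finset.mem_insert, Finset.mem_singleton]
      constructor
      · rintro ⟨h, hy⟩; tauto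
      · rintro (rfl | rfl | rfl) <;>
        · exact ⟨by tauto, by intro h; subst h; tauto⟩
  · have hc3 : ∀ x y z : V, x ≠ y → x ≠ z → y ≠ z → ({x, y, z} : Finset V).card = 3 := by
      intro x y z h1 h2 h3
      rw [Finset.card_insert_of_notMem (by simp [h1, h2]),
        Finset.card_insert_of_notMem (by simp [h3]), Finset.card_singleton]
    rintro (rfl | rfl | rfl | rfl)
    · exact ⟨by intro y hy; simp only [Finset.mem_insert, Finset.mem_singleton] at hy ⊢; tauto,
        hc3 a b c hab hac hbc⟩
    · exact ⟨by intro y hy; simp only [Finset.mem_insert, Finset.mem_singleton] at hy ⊢; tauto,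
        hc3 a b d hab had hbd⟩
    · exact ⟨by intro y hy; simp only [Finset.mem_insert, Finset.mem_singleton] at hy ⊢; tauto,
        hc3 a c d hac had hcd⟩
    · exact ⟨by intro y hy; simp only [Finset.mem_insert, Finset.mem_singleton] at hy ⊢; tauto,
        hc3 b c d hbc hbd hcd⟩


theorem diam_set_iff (hT : IsTournament T) {a b c d : V} (hab : a ≠ b) (hac : a ≠ c)
    (had : a ≠ d) (hbc : b ≠ c) (hbd : b ≠ d) (hcd : c ≠ d) :
    ((({a, b, c, d} : Finset V).powersetCard 3).filter
        (fun t => ∀ v ∈ t, (t.filter fun w => T v w).card = 1)).card = 1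
    ↔ diam4 (T a b) (T a c) (T a d) (T b c) (T b d) (T c d) = true := by
  have hset : ({a, b, c, d} : Finset V).powersetCard 3
      = {{a, b, c}, {a, b, d}, {a, c, d}, {b, c, d}} := by
    ext t
    rw [quad_powerset hab hac had hbc hbd hcd]
    simp only [Finset.mem_insert, Finset.mem_singleton]
  have h12 : ({a, b, c} : Finset V) ≠ {a, b, d} := by
    intro h
    have hd : d ∈ ({a, b, c} : Finset V) := by rw [h]; simp
    simp only [Finset.mem_insert, Finset.mem_singleton] at hd
    rcases hd with rfl | rfl | rfl
    exacts [had rfl, hbd rfl, hcd rfl]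
  have h13 : ({a, b, c} : Finset V) ≠ {a, c, d} := by
    intro h
    have hd : d ∈ ({a, b, c} : Finset V) := by rw [h]; simp
    simp only [Finset.mem_insert, Finset.mem_singleton] at hd
    rcases hd with rfl | rfl | rfl
    exacts [had rfl, hbd rfl, hcd rfl]
  have h14 : ({a, b, c} : Finset V) ≠ {b, c, d} := by
    intro h
    have hd : d ∈ ({a, b, c} : Finset V) := by rw [h]; simp
    simp only [Finset.mem_insert, Finset.mem_singleton] at hd
    rcases hd with rfl | rfl | rfl
    exacts [had rfl, hbd rfl, hcd rfl]
  have h23 : ({a, b, d} : Finset V) ≠ {a, c, d} := by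
    intro h
    have hc : c ∈ ({a, b, d} : Finset V) := by rw [h]; simp
    simp only [Finset.mem_insert, Finset.mem_singleton] at hc
    rcases hc with rfl | rfl | rfl
    exacts [hac rfl, hbc rfl, hcd rfl]
  have h24 : ({a, b, d} : Finset V) ≠ {b, c, d} := by
    intro h
    have hc : c ∈ ({a, b, d} : Finset V) := by rw [h]; simp
    simp only [Finset.mem_insert, Finset.mem_singleton] at hc
    rcases hc with rfl | rfl | rfl
    exacts [hac rfl, hbc rfl, hcd rfl]
  have h34 : ({a, c, d} : Finset V) ≠ {b, c, d} := by
    intro h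
    have hb : b ∈ ({a, c, d} : Finset V) := by rw [h]; simp
    simp only [Finset.mem_insert, Finset.mem_singleton] at hb
    rcases hb with rfl | rfl | rfl
    exacts [hab rfl, hbc rfl, hbd rfl]
  rw [hset, card_filter_four h12 h13 h14 h23 h24 h34]
  simp only [cyc_triple hT hab hac hbc, cyc_triple hT hab had hbd, cyc_triple hT hac had hcd,
    cyc_triple hT hbc hbd hcd, diam4]
  generalize cyc3 (T a b) (T b c) (!(T a c)) = x1
  generalize cyc3 (T a b) (T b d) (!(T a d)) = x2
  generalize cyc3 (T a c) (T c d) (!(T a d)) = x3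
  generalize cyc3 (T b c) (T c d) (!(T b d)) = x4
  revert x1 x2 x3 x4; decide

theorem qset_def (q : V × V × V × V) : qset q = {q.1, q.2.1, q.2.2.1, q.2.2.2} := rfl

theorem dtz_eq (hT : IsTournament T) {q : V × V × V × V} (hq : injQ q) :
    dtz T q = if ((((qset q).powersetCard 3).filter
        (fun t => ∀ v ∈ t, (t.filter fun w => T v w).card = 1)).card = 1) then (1:ℤ) else 0 := by
  obtain ⟨h1, h2, h3, h4, h5, h6⟩ := hq
  rw [dtz, qset_def]
  exact if_congr (diam_set_iff hT h1 h2 h3 h4 h5 h6).symm rfl rfl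

theorem fiber_eq (s : Finset V) (hs : s.card = 4) :
    (univ.filter injQ).filter (fun q : V × V × V × V => qset q = s)
    = univ.filter (fun q : V × V × V × V =>
        (q.1 ∈ s ∧ q.2.1 ∈ s ∧ q.2.2.1 ∈ s ∧ q.2.2.2 ∈ s) ∧ injQ q) := by
  ext q
  simp only [Finset.mem_filter, Finset.mem_univ, true_and]
  constructor
  · rintro ⟨hinj, rfl⟩
    exact ⟨⟨by simp [qset], by simp [qset], by simp [qset], by simp [qset]⟩, hinj⟩
  · rintro ⟨⟨m1, m2, m3, m4⟩, hinj⟩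
    refine ⟨hinj, ?_⟩
    apply Finset.eq_of_subset_of_card_le
    · intro x hx
      simp only [qset_def, Finset.mem_insert, Finset.mem_singleton] at hx
      rcases hx with rfl | rfl | rfl | rfl <;> assumption
    · rw [hs, qset_card hinj]

theorem stepF (hT : IsTournament T) :
    ∑ q ∈ univ.filter injQ, dtz T q = 24 * (numDiamondsOn T univ : ℤ) := by
  have hmaps : ∀ q ∈ univ.filter injQ, qset q ∈ (Finset.univ : Finset V).powersetCard 4 := by
    intro q hq
    rw [Finset.mem_powersetCard]
    exact ⟨Finset.subset_univ _, qset_card (Finset.mem_filter.mp hq).2⟩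
  rw [← Finset.sum_fiberwise_of_maps_to hmaps (dtz T)]
  have hinner : ∀ s ∈ (Finset.univ : Finset V).powersetCard 4,
      ∑ q ∈ (univ.filter injQ).filter (fun q => qset q = s), dtz T q
      = 24 * (if (((s.powersetCard 3).filter
          (fun t => ∀ v ∈ t, (t.filter fun w => T v w).card = 1)).card = 1)
        then (1:ℤ) else 0) := by
    intro s hs
    have hs4 : s.card = 4 := (Finset.mem_powersetCard.mp hs).2
    have hconst : ∀ q ∈ (univ.filter injQ).filter (fun q => qset q = s),
        dtz T q = if (((s.powersetCard 3).filter
          (fun t => ∀ v ∈ t, (t.filter fun w => T v w).card = 1)).card = 1)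
          then (1:ℤ) else 0 := by
      intro q hq
      obtain ⟨hq1, hq2⟩ := Finset.mem_filter.mp hq
      have hinj := (Finset.mem_filter.mp hq1).2
      rw [dtz_eq hT hinj, hq2]
    rw [Finset.sum_congr rfl hconst, Finset.sum_const, fiber_eq s hs4, card_inj4 s, hs4]
    rw [nsmul_eq_mul]
    norm_num [Nat.descFactorial]
  rw [Finset.sum_congr rfl hinner, ← Finset.mul_sum, Finset.sum_boole]
  rw [numDiamondsOn]


theorem card_injQ_univ :
    ((univ : Finset (V × V × V × V)).filter injQ).card
    = (Fintype.card V).descFactorial 4 := by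
  rw [← Finset.card_univ, ← card_inj4 (univ : Finset V)]
  congr 1
  apply Finset.filter_congr
  intro q _
  simp [Finset.mem_univ]

theorem desc4_cast (n : ℕ) :
    ((n.descFactorial 4 : ℕ) : ℤ) = (n:ℤ) * ((n:ℤ) - 1) * ((n:ℤ) - 2) * ((n:ℤ) - 3) := by
  rcases Nat.lt_or_ge n 4 with h | h
  · interval_cases n <;> norm_num [Nat.descFactorial]
  · obtain ⟨m, rfl⟩ : ∃ m, n = m + 4 := ⟨n - 4, by omega⟩
    have h3 : m + 4 - 3 = m + 1 := by omega
    have h2 : m + 4 - 2 = m + 2 := by omega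
    have h1 : m + 4 - 1 = m + 3 := by omega
    simp only [Nat.descFactorial_succ, Nat.descFactorial_zero, h1, h2, h3, mul_one]
    push_cast
    ring

theorem pair_sym {W : Type*} [Fintype W] [DecidableEq W] [LinearOrder W] (f : W → W → ℤ)
    (hf : ∀ i j, f i j = f j i) :
    2 * ∑ p ∈ univ.filter (fun p : W × W => p.1 < p.2), f p.1 p.2
    = (∑ p : W × W, f p.1 p.2) - ∑ i : W, f i i := by
  have hsplit := Finset.sum_filter_add_sum_filter_not (univ : Finset (W × W))
      (fun p => p.1 < p.2) (fun p => f p.1 p.2)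
  have hsplit2 := Finset.sum_filter_add_sum_filter_not
      ((univ : Finset (W × W)).filter fun p => ¬ p.1 < p.2)
      (fun p => p.2 < p.1) (fun p => f p.1 p.2)
  have hgt : ∑ p ∈ (((univ : Finset (W × W)).filter fun p => ¬ p.1 < p.2).filter
        fun p => p.2 < p.1), f p.1 p.2
      = ∑ p ∈ (univ : Finset (W × W)).filter (fun p => p.1 < p.2), f p.1 p.2 := by
    rw [Finset.filter_filter]
    refine Finset.sum_equiv (Equiv.prodComm W W) (fun p => ?_) (fun p hp => ?_)
    · simp only [Finset.mem_filter, Finset.mem_univ, true_and, Equiv.prodComm_apply,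
        Prod.fst_swap, Prod.snd_swap]
      constructor
      · rintro ⟨h1, h2⟩; exact h2
      · intro h; exact ⟨not_lt.mpr (le_of_lt h), h⟩
    · exact hf p.1 p.2
  have hdiag : ∑ p ∈ (((univ : Finset (W × W)).filter fun p => ¬ p.1 < p.2).filter
        fun p => ¬ p.2 < p.1), f p.1 p.2 = ∑ i : W, f i i := by
    rw [Finset.filter_filter]
    have hset : ((univ : Finset (W × W)).filter fun p => ¬ p.1 < p.2 ∧ ¬ p.2 < p.1)
        = (univ : Finset W).image (fun i => (i, i)) := by
      ext p
      simp only [Finset.mem_filter, Finset.mem_univ, true_and, Finset.mem_image]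
      constructor
      · rintro ⟨h1, h2⟩
        exact ⟨p.1, Prod.ext_iff.mpr ⟨rfl, le_antisymm (not_lt.mp h2) (not_lt.mp h1)⟩⟩
      · rintro ⟨i, rfl⟩
        exact ⟨lt_irrefl i, lt_irrefl i⟩
    rw [hset, Finset.sum_image (fun i _ j _ h => (Prod.ext_iff.mp h).1)]
  linarith [hsplit, hsplit2, hgt, hdiag]


theorem main_int {n : ℕ} (T : Fin n → Fin n → Bool) (hT : IsTournament T) :
    6 * ∑ p ∈ Finset.univ.filter (fun p : Fin n × Fin n => p.1 < p.2),
        ((seidel T ^ 2) p.1 p.2)^2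
    = (n:ℤ)^2 * ((n:ℤ) - 1) * ((n:ℤ) - 2) - 96 * (numDiamonds T : ℤ) := by
  have hcard : (Fintype.card (Fin n) : ℤ) = (n : ℤ) := by simp
  have hsym : ∀ i j : Fin n, (fun i j => ((seidel T ^ 2) i j)^2) i j
      = (fun i j => ((seidel T ^ 2) i j)^2) j i := by
    intro i j
    simp only
    have h : (seidel T ^ 2) i j = (seidel T ^ 2) j i := by
      rw [sq, Matrix.mul_apply, Matrix.mul_apply]
      refine Finset.sum_congr rfl fun k _ => ?_
      rw [seidel_skew T i k, seidel_skew T k j]; ring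
    rw [h]
  have hps := pair_sym (fun i j => ((seidel T ^ 2) i j)^2) hsym
  have hdiag : ∑ i : Fin n, ((seidel T ^ 2) i i)^2 = (n:ℤ) * ((n:ℤ) - 1)^2 := by
    have h : ∀ i : Fin n, ((seidel T ^ 2) i i)^2 = ((n:ℤ) - 1)^2 := by
      intro i
      have : (seidel T ^ 2) i i = ∑ k, seidel T i k * seidel T k i := by
        rw [sq, Matrix.mul_apply]
      rw [this, m_diag hT i, hcard]
      ring
    rw [Finset.sum_congr rfl fun i _ => h i, Finset.sum_const, Finset.card_univ,
      Fintype.card_fin, nsmul_eq_mul]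
  have hA := stepA T
  have hB := stepB hT
  rw [hcard] at hB
  have hC := stepC T
  have hD : ∑ q ∈ univ.filter injQ, (pfun T q + pfun T (swap23 q) + pfun T (swap24 q))
      = ∑ q ∈ univ.filter injQ, (1 - 4 * dtz T q) :=
    Finset.sum_congr rfl fun q hq => stepD hT (Finset.mem_filter.mp hq).2
  have hE : ∑ q ∈ univ.filter injQ, ((1:ℤ) - 4 * dtz T q)
      = (((univ : Finset (Fin n × Fin n × Fin n × Fin n)).filter injQ).card : ℤ)
        - 4 * ∑ q ∈ univ.filter injQ, dtz T q := by
    rw [Finset.sum_sub_distrib, Finset.sum_const, ← Finset.mul_sum, nsmul_eq_mul, mul_one]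
  have hN : (((univ : Finset (Fin n × Fin n × Fin n × Fin n)).filter injQ).card : ℤ)
      = (n:ℤ) * ((n:ℤ) - 1) * ((n:ℤ) - 2) * ((n:ℤ) - 3) := by
    rw [card_injQ_univ, Fintype.card_fin, desc4_cast]
  have hF := stepF hT
  have hδ : (numDiamondsOn T univ : ℤ) = (numDiamonds T : ℤ) := rfl
  rw [hδ] at hF
  linear_combination 3 * hps + 3 * hA + 3 * hB + hD - hC + hE + hN - 4 * hF - 3 * hdiag

end Stmt2Proof

/-- `δ_T = n²(n-1)(n-2)/96 − (1/16)·Σ_{i<j} m_{ij}²`, where `m_{ij}` are the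
entries of `S²`. -/
theorem stmt_2 {n : ℕ} (T : Fin n → Fin n → Bool) (hT : IsTournament T) :
    (numDiamonds T : ℚ) =
      (n : ℚ)^2 * ((n : ℚ) - 1) * ((n : ℚ) - 2) / 96 -
        (1/16) * ∑ p ∈ Finset.univ.filter (fun p : Fin n × Fin n => p.1 < p.2),
          ((seidel T ^ 2) p.1 p.2 : ℚ)^2 := by
  have h := Stmt2Proof.main_int T hT
  have h2 := congrArg (fun z : ℤ => (z : ℚ)) h
  push_cast at h2
  linarith [h2]
end

section
/- Let n be an odd positive integer and let S be an n×n skew-symmetric integer matrix all of whose off-diagonal entries lie in {−1, 1} and whose diagonal entries are 0. Then every (n−1)×(n−1) principal minor of S is nonzero; consequently S has rank n−1 (over the rationals), i.e. the eigenvalue 0 of S has multiplicity exactly 1. -/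
open Finset Matrix

variable {V : Type*} [Fintype V] [DecidableEq V]

private lemma minor_ne_zero_aux {m : ℕ} (hm : Even m)
    (S : Matrix (Fin (m + 1)) (Fin (m + 1)) ℤ) (hdiag : ∀ i, S i i = 0)
    (hoff : ∀ i j, i ≠ j → S i j = 1 ∨ S i j = -1) (k : Fin (m + 1)) :
    (S.submatrix k.succAbove k.succAbove).det ≠ 0 := by
  set A := S.submatrix k.succAbove k.succAbove with hA
  intro h0
  have hmap : (A.map (Int.cast : ℤ → ZMod 2)).det = ((A.det : ℤ) : ZMod 2) :=
    (RingHom.map_det (Int.castRingHom (ZMod 2)) A).symm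
  set M : Matrix (Fin m) (Fin m) (ZMod 2) :=
    1 + Matrix.replicateCol Unit (fun _ => (1 : ZMod 2)) * Matrix.replicateRow Unit (fun _ => (1 : ZMod 2))
    with hM
  have hr : ∀ i j : Fin m, M i j = if i = j then 0 else 1 := by
    intro i j
    by_cases h : i = j <;>
      simp [hM, Matrix.one_apply, Matrix.mul_apply, Matrix.add_apply, h] <;> decide
  have hform : A.map (Int.cast : ℤ → ZMod 2) = M := by
    ext i j
    rw [hr i j]
    by_cases hij : i = j
    · subst hij
      simp [A, Matrix.map_apply, hdiag]
    · have hne : k.succAbove i ≠ k.succAbove j := fun h =>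
        hij (Fin.succAbove_right_injective h)
      rcases hoff _ _ hne with h | h <;>
        simp [A, Matrix.map_apply, h, hij] <;> decide
  have hdet2 : (A.map (Int.cast : ℤ → ZMod 2)).det = 1 := by
    rw [hform, hM, Matrix.det_one_add_replicateCol_mul_replicateRow]
    have h1 : (fun _ : Fin m => (1 : ZMod 2)) ⬝ᵥ (fun _ => (1 : ZMod 2)) = (m : ZMod 2) := by
      simp [dotProduct]
    rw [h1, (ZMod.natCast_eq_zero_iff m 2).mpr hm.two_dvd, add_zero]
  rw [hmap, h0] at hdet2
  simp at hdet2

private lemma rank_le_aux {m : ℕ} (B : Matrix (Fin (m + 1)) (Fin (m + 1)) ℚ)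
    (hdet : B.det = 0) : B.rank ≤ m := by
  obtain ⟨v, hv, hv0⟩ := (Matrix.exists_mulVec_eq_zero_iff).mpr hdet
  have hker : 0 < Module.finrank ℚ (LinearMap.ker B.mulVecLin) := by
    rw [Module.finrank_pos_iff]
    exact ⟨⟨⟨v, by simpa [Matrix.mulVecLin] using hv0⟩, 0, by simpa using hv⟩⟩
  have h := LinearMap.finrank_range_add_finrank_ker B.mulVecLin
  rw [Module.finrank_fin_fun] at h
  have : B.rank = Module.finrank ℚ (LinearMap.range B.mulVecLin) := rfl
  omega

private lemma le_rank_aux {m : ℕ} (B : Matrix (Fin (m + 1)) (Fin (m + 1)) ℚ)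
    (k : Fin (m + 1)) (hdet : (B.submatrix k.succAbove k.succAbove).det ≠ 0) :
    m ≤ B.rank := by
  set f := k.succAbove
  set E : Matrix (Fin m) (Fin (m + 1)) ℚ :=
    (1 : Matrix (Fin (m + 1)) (Fin (m + 1)) ℚ).submatrix f ⇑(Equiv.refl (Fin (m + 1)))
  set F : Matrix (Fin (m + 1)) (Fin m) ℚ :=
    (1 : Matrix (Fin (m + 1)) (Fin (m + 1)) ℚ).submatrix ⇑(Equiv.refl (Fin (m + 1))) f
  have hEBF : E * B * F = B.submatrix f f := by
    rw [Matrix.one_submatrix_mul, Matrix.mul_submatrix_one]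
    simp
  have hrk : (B.submatrix f f).rank = m := by
    rw [Matrix.rank_of_isUnit _ ((Matrix.isUnit_iff_isUnit_det _).mpr
      (isUnit_iff_ne_zero.mpr hdet)), Fintype.card_fin]
  calc m = (E * B * F).rank := by rw [hEBF, hrk]
    _ ≤ (E * B).rank := Matrix.rank_mul_le_left _ _
    _ ≤ B.rank := Matrix.rank_mul_le_right _ _


/-- For a skew-symmetric Seidel matrix of odd order `n = m+1`, every
`(n−1)×(n−1)` principal minor is nonzero, and the rank over `ℚ` is `n−1` (the eigenvalue `0`
has multiplicity exactly `1`). -/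
theorem stmt_3 {m : ℕ} (hodd : Odd (m + 1)) (S : Matrix (Fin (m + 1)) (Fin (m + 1)) ℤ)
    (hskew : Sᵀ = -S) (hdiag : ∀ i, S i i = 0)
    (hoff : ∀ i j, i ≠ j → S i j = 1 ∨ S i j = -1) :
    (∀ k : Fin (m + 1), (S.submatrix k.succAbove k.succAbove).det ≠ 0) ∧
      (S.map (fun x : ℤ => (x : ℚ))).rank = m := by
  have hm : Even m := by
    rcases Nat.even_or_odd m with h | h
    · exact h
    · exact absurd h.add_one (Nat.not_even_iff_odd.mpr hodd)
  have hminor := minor_ne_zero_aux hm S hdiag hoff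
  refine ⟨hminor, ?_⟩
  set B := S.map (fun x : ℤ => (x : ℚ)) with hB
  have hBskew : Bᵀ = -B := by
    ext i j
    have := congrFun (congrFun hskew i) j
    simp only [Matrix.transpose_apply, Matrix.neg_apply] at this ⊢
    simp [hB, Matrix.map_apply, this]
  have hBdet : B.det = 0 := by
    have h1 : B.det = (-1) ^ (m + 1) * B.det := by
      conv_lhs => rw [← Matrix.det_transpose, hBskew, Matrix.det_neg]
      simp
    rw [hodd.neg_one_pow] at h1
    linarith
  have hsub : (B.submatrix (0 : Fin (m + 1)).succAbove (0 : Fin (m + 1)).succAbove).det ≠ 0 := by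
    have : B.submatrix (0 : Fin (m + 1)).succAbove (0 : Fin (m + 1)).succAbove
        = (S.submatrix (0 : Fin (m + 1)).succAbove (0 : Fin (m + 1)).succAbove).map
          (fun x : ℤ => (x : ℚ)) := rfl
    rw [this]
    have hd : ((S.submatrix (0 : Fin (m + 1)).succAbove (0 : Fin (m + 1)).succAbove).map
        (fun x : ℤ => (x : ℚ))).det
        = (((S.submatrix (0 : Fin (m + 1)).succAbove (0 : Fin (m + 1)).succAbove).det : ℤ) : ℚ) :=
      (RingHom.map_det (Int.castRingHom ℚ) _).symm
    rw [hd]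
    exact_mod_cast hminor 0
  exact le_antisymm (rank_le_aux B hBdet) (le_rank_aux B 0 hsub)
end

section
/- Let T be an n-tournament with Seidel adjacency matrix S and let m_{ij} denote the (i,j) entry of S². Then the number of 3-cycles of T satisfies c₃(T) = n(n-1)(n-2)/24 + (1/4)·Σ_{i<j} m_{ij}. -/
open Finset Matrix

variable {V : Type*} [Fintype V] [DecidableEq V]

section Aux
variable {T : V → V → Bool}

lemma tne (hT : IsTournament T) {i j : V} (h : T i j = true) : i ≠ j := by
  rintro rfl; rw [hT.1 i] at h; exact Bool.false_ne_true h

lemma tasym (hT : IsTournament T) {i j : V} (h : T i j = true) : T j i = false := by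
  have := hT.2 i j (tne hT h)
  rw [h] at this
  simpa using this.symm

lemma ttotal (hT : IsTournament T) {i j : V} (h : i ≠ j) : T i j = true ∨ T j i = true := by
  have := hT.2 i j h
  cases hji : T j i <;> rw [hji] at this <;> simp_all

/-- card of filter on an explicit 3-set -/
lemma card_filter_triple {x y z : V} (hxy : x ≠ y) (hxz : x ≠ z) (hyz : y ≠ z) (v : V) :
    (({x, y, z} : Finset V).filter fun w => T v w).card
      = (if T v x then 1 else 0) + (if T v y then 1 else 0) + (if T v z then 1 else 0) := by
  rw [Finset.card_filter]
  rw [Finset.sum_insert (by simp [hxy, hxz]), Finset.sum_insert (by simp [hyz]),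
    Finset.sum_singleton, add_assoc]

lemma cycle_of_P (hT : IsTournament T) {x y z : V} (hxy : x ≠ y) (hxz : x ≠ z) (hyz : y ≠ z)
    (hP : ∀ v ∈ ({x, y, z} : Finset V), (({x, y, z} : Finset V).filter fun w => T v w).card = 1)
    (h : T x y = true) : T y z = true ∧ T z x = true := by
  have hx := hP x (by simp)
  rw [card_filter_triple hxy hxz hyz] at hx
  have hxz' : T x z = false := by
    rw [hT.1 x, h] at hx
    cases hc : T x z
    · rfl
    · rw [hc] at hx; simp at hx
  have hzx : T z x = true := by
    rcases ttotal hT hxz with h' | h'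
    · rw [h'] at hxz'; exact absurd hxz' (by simp)
    · exact h'
  have hz := hP z (by simp)
  rw [card_filter_triple hxy hxz hyz] at hz
  have hzy : T z y = false := by
    rw [hT.1 z, hzx] at hz
    cases hc : T z y
    · rfl
    · rw [hc] at hz; simp at hz
  have hyz' : T y z = true := by
    rcases ttotal hT hyz with h' | h'
    · exact h'
    · rw [h'] at hzy; exact absurd hzy (by simp)
  exact ⟨hyz', hzx⟩

def cyc (T : V → V → Bool) : Finset (V × V × V) :=
  Finset.univ.filter fun p => T p.1 p.2.1 = true ∧ T p.2.1 p.2.2 = true ∧ T p.2.2 p.1 = true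

lemma fiber_eq_rotations (hT : IsTournament T) {x y z : V}
    (hxy : T x y = true) (hyz : T y z = true) (hzx : T z x = true) :
    ((cyc T).filter fun p => ({p.1, p.2.1, p.2.2} : Finset V) = ({x, y, z} : Finset V))
      = {(x, y, z), (y, z, x), (z, x, y)} := by
  have nxy := tne hT hxy
  have nyz := tne hT hyz
  have nzx := tne hT hzx
  have hyx := tasym hT hxy
  have hzy := tasym hT hyz
  have hxz := tasym hT hzx
  have hxx := hT.1 x
  have hyy := hT.1 y
  have hzz := hT.1 z
  ext ⟨p1, p2, p3⟩
  simp only [cyc, Finset.mem_filter, Finset.mem_univ, true_and, Finset.mem_insert,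
    Finset.mem_singleton, Prod.mk.injEq]
  constructor
  · rintro ⟨⟨h1, h2, h3⟩, hset⟩
    have m1 : p1 = x ∨ p1 = y ∨ p1 = z := by
      have : p1 ∈ ({x, y, z} : Finset V) := by rw [← hset]; simp
      simpa using this
    have m2 : p2 = x ∨ p2 = y ∨ p2 = z := by
      have : p2 ∈ ({x, y, z} : Finset V) := by rw [← hset]; simp
      simpa using this
    have m3 : p3 = x ∨ p3 = y ∨ p3 = z := by
      have : p3 ∈ ({x, y, z} : Finset V) := by rw [← hset]; simp
      simpa using this
    rcases m1 with rfl | rfl | rfl <;> rcases m2 with rfl | rfl | rfl <;>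
      rcases m3 with rfl | rfl | rfl <;> simp_all
  · rintro (⟨rfl, rfl, rfl⟩ | ⟨rfl, rfl, rfl⟩ | ⟨rfl, rfl, rfl⟩)
    · exact ⟨⟨hxy, hyz, hzx⟩, rfl⟩
    · refine ⟨⟨hyz, hzx, hxy⟩, ?_⟩
      ext w; simp only [Finset.mem_insert, Finset.mem_singleton]; tauto
    · refine ⟨⟨hzx, hxy, hyz⟩, ?_⟩
      ext w; simp only [Finset.mem_insert, Finset.mem_singleton]; tauto

lemma card_rotations {x y z : V} (hxy : x ≠ y) (hxz : x ≠ z) (hyz : y ≠ z) :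
    ({(x, y, z), (y, z, x), (z, x, y)} : Finset (V × V × V)).card = 3 := by
  rw [Finset.card_insert_of_notMem (by simp [Prod.ext_iff]; tauto),
    Finset.card_insert_of_notMem (by simp [Prod.ext_iff]; tauto), Finset.card_singleton]

lemma card_cyc (hT : IsTournament T) : (cyc T).card = 3 * numC3 T := by
  classical
  set tgt := ((Finset.univ.powersetCard 3).filter
    fun t : Finset V => ∀ v ∈ t, (t.filter fun w => T v w).card = 1) with htgt
  have hmap : ∀ p ∈ cyc T, ({p.1, p.2.1, p.2.2} : Finset V) ∈ tgt := by
    rintro ⟨p1, p2, p3⟩ hp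
    simp only [cyc, Finset.mem_filter, Finset.mem_univ, true_and] at hp
    obtain ⟨h1, h2, h3⟩ := hp
    have n12 := tne hT h1
    have n23 := tne hT h2
    have n31 := tne hT h3
    have n13 : p1 ≠ p3 := n31.symm
    simp only [htgt, Finset.mem_filter, Finset.mem_powersetCard_univ]
    refine ⟨?_, ?_⟩
    · rw [Finset.card_insert_of_notMem (by simp [n12, n13]),
        Finset.card_insert_of_notMem (by simp [n23]), Finset.card_singleton]
    · intro v hv
      rw [card_filter_triple n12 n13 n23]
      have h21 := tasym hT h1
      have h32 := tasym hT h2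
      have h13 := tasym hT h3
      simp only [Finset.mem_insert, Finset.mem_singleton] at hv
      rcases hv with rfl | rfl | rfl <;> simp_all [hT.1]
  rw [Finset.card_eq_sum_card_fiberwise hmap]
  have hfib : ∀ t ∈ tgt, ((cyc T).filter fun p => ({p.1, p.2.1, p.2.2} : Finset V) = t).card = 3 := by
    intro t ht
    simp only [htgt, Finset.mem_filter, Finset.mem_powersetCard_univ] at ht
    obtain ⟨hcard, hP⟩ := ht
    obtain ⟨x, y, z, hxy, hxz, hyz, rfl⟩ := Finset.card_eq_three.mp hcard
    rcases ttotal hT hxy with h | h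
    · obtain ⟨h2, h3⟩ := cycle_of_P hT hxy hxz hyz hP h
      rw [fiber_eq_rotations hT h h2 h3]
      exact card_rotations hxy hxz hyz
    · have hswap : ({x, y, z} : Finset V) = ({y, x, z} : Finset V) := by
        ext w; simp; tauto
      rw [hswap] at hP ⊢
      obtain ⟨h2, h3⟩ := cycle_of_P hT hxy.symm hyz hxz hP h
      rw [fiber_eq_rotations hT h h2 h3]
      exact card_rotations hxy.symm hyz hxz
  rw [Finset.sum_congr rfl hfib, Finset.sum_const, smul_eq_mul, mul_comm]
  rfl
end Aux

def aQ (T : V → V → Bool) : V → V → ℚ := fun i j => if T i j then 1 else 0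

section Pointwise
variable {T : V → V → Bool}

lemma aQ_self (hT : IsTournament T) (i : V) : aQ T i i = 0 := by simp [aQ, hT.1 i]

lemma aQ_add (hT : IsTournament T) (i j : V) : aQ T i j + aQ T j i = if i = j then 0 else 1 := by
  by_cases h : i = j
  · subst h; simp [aQ, hT.1 i]
  · have := hT.2 i j h
    simp only [aQ, if_neg h]
    cases hji : T j i <;> rw [hji] at this <;> simp [this]

lemma aQ_mul (hT : IsTournament T) (i j : V) : aQ T i j * aQ T j i = 0 := by
  by_cases h : i = j
  · subst h; simp [aQ, hT.1 i]
  · have := hT.2 i j h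
    cases hji : T j i <;> rw [hji] at this <;> simp [aQ, this, hji]

lemma aQ_sq (i j : V) : aQ T i j * aQ T i j = aQ T i j := by
  by_cases h : T i j <;> simp [aQ, h]

end Pointwise

section Sums
variable {T : V → V → Bool}

local notation "q" => (Fintype.card V : ℚ)

lemma sum_ite_ne (i : V) : ∑ j : V, (if i = j then (0:ℚ) else 1) = q - 1 := by
  have : ∀ j : V, (if i = j then (0:ℚ) else 1) = 1 - (if i = j then 1 else 0) := by
    intro j; by_cases h : i = j <;> simp [h]
  rw [Finset.sum_congr rfl fun j _ => this j, Finset.sum_sub_distrib, Finset.sum_const,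
    Finset.sum_ite_eq]
  simp [Finset.card_univ]

/-- out-degree -/
noncomputable def dQ (T : V → V → Bool) (i : V) : ℚ := ∑ j : V, aQ T i j

lemma sum_in_deg (hT : IsTournament T) (i : V) : ∑ j : V, aQ T j i = (q - 1) - dQ T i := by
  have : ∀ j : V, aQ T j i = (if i = j then (0:ℚ) else 1) - aQ T i j := by
    intro j
    have h := aQ_add hT i j
    linarith
  rw [Finset.sum_congr rfl fun j _ => this j, Finset.sum_sub_distrib, sum_ite_ne]
  rfl

lemma two_D1 (hT : IsTournament T) : 2 * (∑ i : V, dQ T i) = q ^ 2 - q := by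
  have h1 : ∑ i : V, ∑ j : V, aQ T j i = ∑ i : V, ∑ j : V, aQ T i j := Finset.sum_comm
  have h2 : ∀ i : V, ∑ j : V, (aQ T i j + aQ T j i) = q - 1 := by
    intro i
    rw [Finset.sum_congr rfl fun j _ => aQ_add hT i j, sum_ite_ne]
  have h3 : ∑ i : V, ∑ j : V, (aQ T i j + aQ T j i) = q * (q - 1) := by
    rw [Finset.sum_congr rfl fun i _ => h2 i, Finset.sum_const, Finset.card_univ]
    simp [nsmul_eq_mul]
  have h4 : ∑ i : V, ∑ j : V, (aQ T i j + aQ T j i)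
      = (∑ i : V, ∑ j : V, aQ T i j) + ∑ i : V, ∑ j : V, aQ T j i := by
    rw [← Finset.sum_add_distrib]
    exact Finset.sum_congr rfl fun i _ => Finset.sum_add_distrib
  rw [h1] at h4
  unfold dQ
  nlinarith [h3, h4]


lemma sum_ite_ne' (i : V) : ∑ j : V, (if j = i then (0:ℚ) else 1) = q - 1 := by
  have : ∀ j : V, (if j = i then (0:ℚ) else 1) = (if i = j then 0 else 1) := by
    intro j; by_cases h : j = i
    · simp [h]
    · rw [if_neg h, if_neg (fun hh : i = j => h hh.symm)]
  rw [Finset.sum_congr rfl fun j _ => this j, sum_ite_ne]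

lemma sumN' : ∑ i : V, ∑ j : V, ∑ k : V, aQ T j i * aQ T k j * aQ T i k
    = ∑ i : V, ∑ j : V, ∑ k : V, aQ T i j * aQ T j k * aQ T k i := by
  rw [Finset.sum_comm]
  exact Finset.sum_congr rfl fun i _ => Finset.sum_congr rfl fun j _ =>
    Finset.sum_congr rfl fun k _ => by ring

lemma sumT3 (hT : IsTournament T) :
    ∑ i : V, ∑ j : V, ∑ k : V, aQ T i j * aQ T i k * (aQ T j k + aQ T k j)
      = (∑ i : V, dQ T i ^ 2) - ∑ i : V, dQ T i := by
  have inner : ∀ i j : V, ∑ k : V, aQ T i j * aQ T i k * (aQ T j k + aQ T k j)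
      = aQ T i j * dQ T i - aQ T i j := by
    intro i j
    have pw : ∀ k : V, aQ T i j * aQ T i k * (aQ T j k + aQ T k j)
        = aQ T i j * aQ T i k - (if j = k then aQ T i j * aQ T i k else 0) := by
      intro k
      rw [aQ_add hT j k]
      by_cases h : j = k
      · subst h; ring_nf; simp
      · simp [h]
    rw [Finset.sum_congr rfl fun k _ => pw k, Finset.sum_sub_distrib, Finset.sum_ite_eq,
      ← Finset.mul_sum]
    simp [dQ, aQ_sq]
  have inner2 : ∀ i : V, ∑ j : V, (aQ T i j * dQ T i - aQ T i j)
      = dQ T i ^ 2 - dQ T i := by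
    intro i
    rw [Finset.sum_sub_distrib, ← Finset.sum_mul]
    simp [dQ]; ring
  rw [Finset.sum_congr rfl fun i _ => Finset.sum_congr rfl fun j _ => inner i j,
    Finset.sum_congr rfl fun i _ => inner2 i, Finset.sum_sub_distrib]

lemma sumT4 (hT : IsTournament T) :
    ∑ i : V, ∑ j : V, ∑ k : V, aQ T j i * aQ T j k * (aQ T k i + aQ T i k)
      = (∑ i : V, dQ T i ^ 2) - ∑ i : V, dQ T i := by
  have inner : ∀ i j : V, ∑ k : V, aQ T j i * aQ T j k * (aQ T k i + aQ T i k)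
      = aQ T j i * dQ T j - aQ T j i := by
    intro i j
    have pw : ∀ k : V, aQ T j i * aQ T j k * (aQ T k i + aQ T i k)
        = aQ T j i * aQ T j k - (if k = i then aQ T j i * aQ T j k else 0) := by
      intro k
      rw [aQ_add hT k i]
      by_cases h : k = i
      · subst h; ring_nf; simp
      · simp [h]
    rw [Finset.sum_congr rfl fun k _ => pw k, Finset.sum_sub_distrib, Finset.sum_ite_eq',
      ← Finset.mul_sum]
    simp [dQ, aQ_sq]
  rw [Finset.sum_congr rfl fun i _ => Finset.sum_congr rfl fun j _ => inner i j]
  rw [Finset.sum_comm]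
  have inner2 : ∀ j : V, ∑ i : V, (aQ T j i * dQ T j - aQ T j i)
      = dQ T j ^ 2 - dQ T j := by
    intro j
    rw [Finset.sum_sub_distrib, ← Finset.sum_mul]
    simp [dQ]; ring
  rw [Finset.sum_congr rfl fun j _ => inner2 j, Finset.sum_sub_distrib]

lemma sumT5 (hT : IsTournament T) :
    ∑ i : V, ∑ j : V, ∑ k : V, aQ T k i * aQ T k j * (aQ T i j + aQ T j i)
      = (∑ i : V, dQ T i ^ 2) - ∑ i : V, dQ T i := by
  have inner : ∀ i : V, ∑ j : V, ∑ k : V, aQ T k i * aQ T k j * (aQ T i j + aQ T j i)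
      = (∑ k : V, aQ T k i * dQ T k) - ∑ k : V, aQ T k i := by
    intro i
    have pw : ∀ j k : V, aQ T k i * aQ T k j * (aQ T i j + aQ T j i)
        = aQ T k i * aQ T k j - (if i = j then aQ T k i * aQ T k j else 0) := by
      intro j k
      rw [aQ_add hT i j]
      by_cases h : i = j
      · subst h; ring_nf; simp
      · simp [h]
    rw [Finset.sum_congr rfl fun j _ => Finset.sum_congr rfl fun k _ => pw j k]
    rw [Finset.sum_comm]
    have hj : ∀ k : V, ∑ j : V, (aQ T k i * aQ T k j - (if i = j then aQ T k i * aQ T k j else 0))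
        = aQ T k i * dQ T k - aQ T k i := by
      intro k
      rw [Finset.sum_sub_distrib, Finset.sum_ite_eq, ← Finset.mul_sum]
      simp [dQ, aQ_sq]
    rw [Finset.sum_congr rfl fun k _ => hj k, Finset.sum_sub_distrib]
  rw [Finset.sum_congr rfl fun i _ => inner i, Finset.sum_sub_distrib]
  have h1 : ∑ i : V, ∑ k : V, aQ T k i * dQ T k = ∑ k : V, dQ T k ^ 2 := by
    rw [Finset.sum_comm]
    refine Finset.sum_congr rfl fun k _ => ?_
    rw [← Finset.sum_mul]
    simp [dQ]; ring
  have h2 : ∑ i : V, ∑ k : V, aQ T k i = ∑ k : V, dQ T k := by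
    rw [Finset.sum_comm]; rfl
  rw [h1, h2]

lemma big1 (hT : IsTournament T) :
    ∑ i : V, ∑ j : V, ∑ k : V,
        (aQ T i j + aQ T j i) * (aQ T j k + aQ T k j) * (aQ T k i + aQ T i k)
      = q * (q - 1) * (q - 2) := by
  have pw : ∀ i j k : V, (aQ T i j + aQ T j i) * (aQ T j k + aQ T k j) * (aQ T k i + aQ T i k)
      = (if i = j then (0:ℚ) else 1) * ((if j = k then (0:ℚ) else 1) * (if k = i then (0:ℚ) else 1)) := by
    intro i j k
    rw [aQ_add hT i j, aQ_add hT j k, aQ_add hT k i]; ring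
  rw [Finset.sum_congr rfl fun i _ => Finset.sum_congr rfl fun j _ =>
    Finset.sum_congr rfl fun k _ => pw i j k]
  have inner : ∀ i j : V, i ≠ j →
      ∑ k : V, (if j = k then (0:ℚ) else 1) * (if k = i then (0:ℚ) else 1) = q - 2 := by
    intro i j hij
    have pw2 : ∀ k : V, (if j = k then (0:ℚ) else 1) * (if k = i then (0:ℚ) else 1)
        = 1 - (if j = k then 1 else 0) - (if k = i then 1 else 0) := by
      intro k
      by_cases h1 : j = k <;> by_cases h2 : k = i <;> simp_all
    rw [Finset.sum_congr rfl fun k _ => pw2 k, Finset.sum_sub_distrib, Finset.sum_sub_distrib,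
      Finset.sum_const, Finset.sum_ite_eq, Finset.sum_ite_eq']
    simp [Finset.card_univ]
    ring
  have hrow : ∀ i : V, ∑ j : V, (if i = j then (0:ℚ) else 1) *
      ∑ k : V, ((if j = k then (0:ℚ) else 1) * (if k = i then (0:ℚ) else 1))
      = (q - 1) * (q - 2) := by
    intro i
    have hpt : ∀ j : V, (if i = j then (0:ℚ) else 1) *
        ∑ k : V, ((if j = k then (0:ℚ) else 1) * (if k = i then (0:ℚ) else 1))
        = (if i = j then (0:ℚ) else 1) * (q - 2) := by
      intro j
      by_cases h : i = j
      · simp [h]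
      · rw [inner i j h]
    rw [Finset.sum_congr rfl fun j _ => hpt j, ← Finset.sum_mul, sum_ite_ne]
  have hpull : ∀ i j : V, ∑ k : V, (if i = j then (0:ℚ) else 1) *
      ((if j = k then (0:ℚ) else 1) * (if k = i then (0:ℚ) else 1))
      = (if i = j then (0:ℚ) else 1) *
        ∑ k : V, ((if j = k then (0:ℚ) else 1) * (if k = i then (0:ℚ) else 1)) :=
    fun i j => (Finset.mul_sum _ _ _).symm
  rw [Finset.sum_congr rfl fun i _ => Finset.sum_congr rfl fun j _ => hpull i j,
    Finset.sum_congr rfl fun i _ => hrow i, Finset.sum_const, Finset.card_univ]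
  simp [nsmul_eq_mul]
  ring


lemma big2 (hT : IsTournament T) :
    ∑ i : V, ∑ j : V, ∑ k : V,
        (aQ T i j + aQ T j i) * (aQ T j k + aQ T k j) * (aQ T k i + aQ T i k)
      = 2 * (∑ i : V, ∑ j : V, ∑ k : V, aQ T i j * aQ T j k * aQ T k i)
        + 3 * ((∑ i : V, dQ T i ^ 2) - ∑ i : V, dQ T i) := by
  have pw : ∀ i j k : V,
      (aQ T i j + aQ T j i) * (aQ T j k + aQ T k j) * (aQ T k i + aQ T i k)
      = aQ T i j * aQ T j k * aQ T k i
        + aQ T j i * aQ T k j * aQ T i k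
        + aQ T i j * aQ T i k * (aQ T j k + aQ T k j)
        + aQ T j i * aQ T j k * (aQ T k i + aQ T i k)
        + aQ T k i * aQ T k j * (aQ T i j + aQ T j i) := by
    intro i j k; ring
  rw [Finset.sum_congr rfl fun i _ => Finset.sum_congr rfl fun j _ =>
    Finset.sum_congr rfl fun k _ => pw i j k]
  simp only [Finset.sum_add_distrib]
  rw [sumN', sumT3 hT, sumT4 hT, sumT5 hT]
  ring

lemma N_val (hT : IsTournament T) :
    2 * (∑ i : V, ∑ j : V, ∑ k : V, aQ T i j * aQ T j k * aQ T k i)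
      + 3 * ((∑ i : V, dQ T i ^ 2) - ∑ i : V, dQ T i) = q * (q - 1) * (q - 2) := by
  rw [← big2 hT, big1 hT]

end Sums

section Seidel
variable {T : V → V → Bool}

local notation "q" => (Fintype.card V : ℚ)

lemma seidel_sq_entry (i j : V) : ((seidel T ^ 2) i j : ℚ)
    = ∑ k : V, (aQ T i k - aQ T k i) * (aQ T k j - aQ T j k) := by
  rw [pow_two, Matrix.mul_apply]
  push_cast
  refine Finset.sum_congr rfl fun k _ => ?_
  simp only [seidel, adj, Matrix.sub_apply, Matrix.transpose_apply, Matrix.of_apply, aQ]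
  push_cast
  split_ifs <;> norm_num

lemma seidel_sq_symm (i j : V) : ((seidel T ^ 2) i j : ℚ) = ((seidel T ^ 2) j i : ℚ) := by
  rw [seidel_sq_entry, seidel_sq_entry]
  exact Finset.sum_congr rfl fun k _ => by ring

lemma diag_sum (hT : IsTournament T) :
    ∑ i : V, ((seidel T ^ 2) i i : ℚ) = -(q ^ 2 - q) := by
  have hpt : ∀ i : V, ((seidel T ^ 2) i i : ℚ) = -(q - 1) := by
    intro i
    rw [seidel_sq_entry]
    have pw : ∀ k : V, (aQ T i k - aQ T k i) * (aQ T k i - aQ T i k)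
        = -(if i = k then (0:ℚ) else 1) := by
      intro k
      rw [← aQ_add hT i k]
      linear_combination 2 * (aQ_mul hT i k) - aQ_sq (T := T) i k - aQ_sq (T := T) k i
    rw [Finset.sum_congr rfl fun k _ => pw k, Finset.sum_neg_distrib, sum_ite_ne]
  rw [Finset.sum_congr rfl fun i _ => hpt i, Finset.sum_const, Finset.card_univ]
  simp [nsmul_eq_mul]
  ring

lemma off_sum (hT : IsTournament T) :
    ∑ i : V, ∑ j : V, ((seidel T ^ 2) i j : ℚ)
      = ∑ k : V, -((2 * dQ T k - (q - 1)) ^ 2) := by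
  rw [Finset.sum_congr rfl fun i _ => Finset.sum_congr rfl fun j _ => seidel_sq_entry i j]
  rw [Finset.sum_congr rfl fun i _ => Finset.sum_comm (γ := V)]
  rw [Finset.sum_comm]
  refine Finset.sum_congr rfl fun k _ => ?_
  rw [← Finset.sum_mul_sum]
  have h1 : ∑ i : V, (aQ T i k - aQ T k i) = (q - 1) - 2 * dQ T k := by
    rw [Finset.sum_sub_distrib, sum_in_deg hT k]
    have : ∑ i : V, aQ T k i = dQ T k := rfl
    rw [this]; ring
  have h2 : ∑ j : V, (aQ T k j - aQ T j k) = 2 * dQ T k - (q - 1) := by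
    rw [Finset.sum_sub_distrib, sum_in_deg hT k]
    have : ∑ j : V, aQ T k j = dQ T k := rfl
    rw [this]; ring
  rw [h1, h2]; ring

end Seidel

section PairSum
variable [LinearOrder V]

lemma pair_sum (M : V → V → ℚ) (hs : ∀ i j, M i j = M j i) :
    2 * ∑ p ∈ Finset.univ.filter (fun p : V × V => p.1 < p.2), M p.1 p.2
      = (∑ i : V, ∑ j : V, M i j) - ∑ i : V, M i i := by
  classical
  have hsplit : (∑ p : V × V, M p.1 p.2)
      = (∑ p ∈ Finset.univ.filter (fun p : V × V => p.1 < p.2), M p.1 p.2)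
        + ∑ p ∈ Finset.univ.filter (fun p : V × V => ¬ p.1 < p.2), M p.1 p.2 :=
    (Finset.sum_filter_add_sum_filter_not _ _ _).symm
  have hfe1 : (Finset.univ.filter (fun p : V × V => ¬ p.1 < p.2)).filter
      (fun p : V × V => p.2 < p.1) = Finset.univ.filter (fun p : V × V => p.2 < p.1) := by
    rw [Finset.filter_filter]
    apply Finset.filter_congr
    intro p _
    constructor
    · exact fun h => h.2
    · exact fun h => ⟨not_lt.mpr h.le, h⟩
  have hfe2 : (Finset.univ.filter (fun p : V × V => ¬ p.1 < p.2)).filter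
      (fun p : V × V => ¬ p.2 < p.1) = Finset.univ.filter (fun p : V × V => p.1 = p.2) := by
    rw [Finset.filter_filter]
    apply Finset.filter_congr
    intro p _
    constructor
    · exact fun h => le_antisymm (not_lt.mp h.2) (not_lt.mp h.1)
    · exact fun h => ⟨fun hh => absurd h (ne_of_lt hh), fun hh => absurd h.symm (ne_of_lt hh)⟩
  have hsplit2 : ∑ p ∈ Finset.univ.filter (fun p : V × V => ¬ p.1 < p.2), M p.1 p.2
      = (∑ p ∈ Finset.univ.filter (fun p : V × V => p.2 < p.1), M p.1 p.2)
        + ∑ p ∈ Finset.univ.filter (fun p : V × V => p.1 = p.2), M p.1 p.2 := by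
    rw [← Finset.sum_filter_add_sum_filter_not
      (Finset.univ.filter (fun p : V × V => ¬ p.1 < p.2)) (fun p : V × V => p.2 < p.1),
      hfe1, hfe2]
  have hswap : ∑ p ∈ Finset.univ.filter (fun p : V × V => p.2 < p.1), M p.1 p.2
      = ∑ p ∈ Finset.univ.filter (fun p : V × V => p.1 < p.2), M p.1 p.2 := by
    refine Finset.sum_nbij' (i := Prod.swap) (j := Prod.swap) ?_ ?_ ?_ ?_ ?_
    · intro p hp; simp only [Finset.mem_filter, Finset.mem_univ, true_and] at hp ⊢
      exact hp
    · intro p hp; simp only [Finset.mem_filter, Finset.mem_univ, true_and] at hp ⊢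
      exact hp
    · intro p _; simp
    · intro p _; simp
    · intro p _; exact hs p.1 p.2
  have hdiag : ∑ p ∈ Finset.univ.filter (fun p : V × V => p.1 = p.2), M p.1 p.2
      = ∑ i : V, M i i := by
    refine Finset.sum_nbij' (i := fun p => p.1) (j := fun v => (v, v)) ?_ ?_ ?_ ?_ ?_
    · intro p _; exact Finset.mem_univ _
    · intro v _; simp
    · intro p hp; simp only [Finset.mem_filter, Finset.mem_univ, true_and] at hp
      exact Prod.ext rfl hp
    · intro v _; rfl
    · intro p hp; simp only [Finset.mem_filter, Finset.mem_univ, true_and] at hp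
      rw [← hp]
  have hprod : (∑ p : V × V, M p.1 p.2) = ∑ i : V, ∑ j : V, M i j :=
    Fintype.sum_prod_type _
  linarith

end PairSum

/-- `c₃(T) = n(n-1)(n-2)/24 + (1/4)·Σ_{i<j} m_{ij}`, where `m_{ij}` are the
entries of `S²`. -/
theorem stmt_5 {n : ℕ} (T : Fin n → Fin n → Bool) (hT : IsTournament T) :
    (numC3 T : ℚ) =
      (n : ℚ) * ((n : ℚ) - 1) * ((n : ℚ) - 2) / 24 +
        (1/4) * ∑ p ∈ Finset.univ.filter (fun p : Fin n × Fin n => p.1 < p.2),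
          ((seidel T ^ 2) p.1 p.2 : ℚ) := by

  classical
  set q : ℚ := (Fintype.card (Fin n) : ℚ) with hq
  have hqn : q = (n : ℚ) := by rw [hq, Fintype.card_fin]
  set D1 : ℚ := ∑ i : Fin n, dQ T i with hD1
  set D2 : ℚ := ∑ i : Fin n, dQ T i ^ 2 with hD2
  set N : ℚ := ∑ i : Fin n, ∑ j : Fin n, ∑ k : Fin n, aQ T i j * aQ T j k * aQ T k i with hN
  set X : ℚ := ∑ p ∈ Finset.univ.filter (fun p : Fin n × Fin n => p.1 < p.2),
    ((seidel T ^ 2) p.1 p.2 : ℚ) with hX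
  -- N = 3 * numC3 T
  have HN : N = 3 * (numC3 T : ℚ) := by
    have hcard : ((cyc T).card : ℚ) = 3 * (numC3 T : ℚ) := by
      exact_mod_cast congrArg (Nat.cast : ℕ → ℚ) (card_cyc hT)
    rw [hN, ← hcard]
    have hb : ((cyc T).card : ℚ)
        = ∑ p : Fin n × Fin n × Fin n,
            if (T p.1 p.2.1 = true ∧ T p.2.1 p.2.2 = true ∧ T p.2.2 p.1 = true)
            then (1 : ℚ) else 0 := by
      rw [Finset.sum_boole]
      rfl
    rw [hb, Fintype.sum_prod_type]
    refine Finset.sum_congr rfl fun i _ => ?_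
    rw [Fintype.sum_prod_type]
    refine Finset.sum_congr rfl fun j _ => Finset.sum_congr rfl fun k _ => ?_
    simp only [aQ]
    by_cases h1 : T i j <;> by_cases h2 : T j k <;> by_cases h3 : T k i <;>
      simp [h1, h2, h3]
  have H2 : 2 * N + 3 * (D2 - D1) = q * (q - 1) * (q - 2) := N_val hT
  have H3 : 2 * D1 = q ^ 2 - q := two_D1 hT
  have H4 : 2 * X = -(4 * D2) + 4 * (q - 1) * D1 - q * (q - 1) ^ 2 + q ^ 2 - q := by
    have hp := pair_sum (fun i j => ((seidel T ^ 2) i j : ℚ))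
      (fun i j => seidel_sq_symm i j)
    rw [off_sum hT, diag_sum hT] at hp
    have e1 : ∑ k : Fin n, -((2 * dQ T k - (q - 1)) ^ 2)
        = ∑ k : Fin n, (4 * (q - 1) * dQ T k - 4 * dQ T k ^ 2 - (q - 1) ^ 2) :=
      Finset.sum_congr rfl fun k _ => by ring
    rw [e1, Finset.sum_sub_distrib, Finset.sum_sub_distrib, ← Finset.mul_sum,
      ← Finset.mul_sum, Finset.sum_const, Finset.card_univ] at hp
    rw [hX]
    rw [hp]
    simp only [nsmul_eq_mul, ← hD1, ← hD2, ← hq]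
    ring
  rw [← hqn]
  linear_combination (-(1:ℚ)/3) * HN + (1/6) * H2 + ((2 - q)/4) * H3 - (1/8) * H4
end

section
/- Let T and T′ be n-tournaments with Seidel adjacency matrices S and S′ such that S′ = D S D for some diagonal matrix D with diagonal entries in {−1, 1}. Then δ_T = δ_{T′}, i.e. T and T′ have the same number of 4-element vertex subsets inducing a diamond. -/
open Finset Matrix

variable {V : Type*} [Fintype V] [DecidableEq V]

set_option linter.unusedSectionVars false

def cycB (x y z : Bool) : Bool := (x && y && !z) || (!x && !y && z)

lemma bool_final (p q r u v w fa fb fc fd : Bool) :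
    ((if cycB (u != (fb != fc)) (w != (fc != fd)) (v != (fb != fd)) = true then (1:ℕ) else 0) +
     (if cycB (q != (fa != fc)) (w != (fc != fd)) (r != (fa != fd)) = true then (1:ℕ) else 0) +
     (if cycB (p != (fa != fb)) (v != (fb != fd)) (r != (fa != fd)) = true then (1:ℕ) else 0) +
     (if cycB (p != (fa != fb)) (u != (fb != fc)) (q != (fa != fc)) = true then (1:ℕ) else 0) = 1) ↔
    ((if cycB u w v = true then (1:ℕ) else 0) + (if cycB q w r = true then (1:ℕ) else 0) +
     (if cycB p v r = true then (1:ℕ) else 0) + (if cycB p u q = true then (1:ℕ) else 0) = 1) := by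
  revert p q r u v w fa fb fc fd; decide

lemma sum3 {β : Type*} [DecidableEq β] (f : β → ℕ) {x y z : β}
    (hxy : x ≠ y) (hxz : x ≠ z) (hyz : y ≠ z) :
    ∑ a ∈ ({x, y, z} : Finset β), f a = f x + f y + f z := by
  rw [Finset.sum_insert (by simp [hxy, hxz]), Finset.sum_pair hyz, add_assoc]

lemma card_filter3 {β : Type*} [DecidableEq β] (p : β → Prop) [DecidablePred p] {x y z : β}
    (hxy : x ≠ y) (hxz : x ≠ z) (hyz : y ≠ z) :
    (({x, y, z} : Finset β).filter p).card =
      (if p x then (1:ℕ) else 0) + (if p y then (1:ℕ) else 0) + (if p z then (1:ℕ) else 0) := by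
  rw [Finset.card_filter]; exact sum3 _ hxy hxz hyz

lemma card_filter4 {β : Type*} [DecidableEq β] (p : β → Prop) [DecidablePred p] {x y z w : β}
    (hxy : x ≠ y) (hxz : x ≠ z) (hxw : x ≠ w) (hyz : y ≠ z) (hyw : y ≠ w) (hzw : z ≠ w) :
    (({x, y, z, w} : Finset β).filter p).card =
      (if p x then (1:ℕ) else 0) + (if p y then (1:ℕ) else 0) + (if p z then (1:ℕ) else 0)
        + (if p w then (1:ℕ) else 0) := by
  rw [Finset.card_filter, Finset.sum_insert (by simp [hxy, hxz, hxw]),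
    sum3 _ hyz hyw hzw]; ring

lemma cyc_iff (T : V → V → Bool) (hT : IsTournament T) {i j k : V}
    (hij : i ≠ j) (hik : i ≠ k) (hjk : j ≠ k) :
    (∀ v ∈ ({i, j, k} : Finset V), (({i, j, k} : Finset V).filter fun w => T v w).card = 1) ↔
      cycB (T i j) (T j k) (T i k) = true := by
  have h1 : T i i = false := hT.1 i
  have h2 : T j j = false := hT.1 j
  have h3 : T k k = false := hT.1 k
  have h4 : T j i = !T i j := hT.2 j i hij.symm
  have h5 : T k i = !T i k := hT.2 k i hik.symm
  have h6 : T k j = !T j k := hT.2 k j hjk.symm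
  simp only [Finset.mem_insert, Finset.mem_singleton, forall_eq_or_imp, forall_eq]
  rw [card_filter3 _ hij hik hjk, card_filter3 _ hij hik hjk, card_filter3 _ hij hik hjk,
    h1, h2, h3, h4, h5, h6]
  cases hp : T i j <;> cases hq : T j k <;> cases hr : T i k <;> simp [cycB]

lemma pc3 {a b c d : V} (hab : a ≠ b) (hac : a ≠ c) (had : a ≠ d)
    (hbc : b ≠ c) (hbd : b ≠ d) (hcd : c ≠ d) :
    ({a, b, c, d} : Finset V).powersetCard 3 =
      {{b, c, d}, {a, c, d}, {a, b, d}, {a, b, c}} := by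
  have h1 : a ∉ ({b, c, d} : Finset V) := by simp [hab, hac, had]
  have h2 : b ∉ ({c, d} : Finset V) := by simp [hbc, hbd]
  have h3 : c ∉ ({d} : Finset V) := by simp [hcd]
  have hbcd : ({b, c, d} : Finset V).card = 3 := by
    rw [Finset.card_insert_of_notMem h2, Finset.card_pair hcd]
  have hcd2 : ({c, d} : Finset V).card = 2 := Finset.card_pair hcd
  have pd1 : ({d} : Finset V).powersetCard 1 = {{d}} := by
    rw [show (1 : ℕ) = ({d} : Finset V).card from (Finset.card_singleton d).symm,
      Finset.powersetCard_self]
  have pcd1 : ({c, d} : Finset V).powersetCard 1 = {{d}, {c}} := by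
    rw [show ({c, d} : Finset V) = insert c {d} from rfl,
      show (1 : ℕ) = 0 + 1 from rfl, Finset.powersetCard_succ_insert h3,
      Finset.powersetCard_zero, show Nat.succ 0 = 1 from rfl, pd1]
    rfl
  have pcd2 : ({c, d} : Finset V).powersetCard 2 = {{c, d}} := by
    rw [show (2 : ℕ) = ({c, d} : Finset V).card from hcd2.symm, Finset.powersetCard_self]
  have pbcd2 : ({b, c, d} : Finset V).powersetCard 2 = {{c, d}, {b, d}, {b, c}} := by
    rw [show ({b, c, d} : Finset V) = insert b {c, d} from rfl,
      show (2 : ℕ) = 1 + 1 from rfl, Finset.powersetCard_succ_insert h2,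
      show Nat.succ 1 = 2 from rfl, pcd2, pcd1]
    ext t
    simp only [Finset.image_insert, Finset.image_singleton, Finset.mem_union,
      Finset.mem_insert, Finset.mem_singleton]
  have pbcd3 : ({b, c, d} : Finset V).powersetCard 3 = {{b, c, d}} := by
    rw [show (3 : ℕ) = ({b, c, d} : Finset V).card from hbcd.symm, Finset.powersetCard_self]
  rw [show ({a, b, c, d} : Finset V) = insert a {b, c, d} from rfl,
    show (3 : ℕ) = 2 + 1 from rfl, Finset.powersetCard_succ_insert h1,
    show Nat.succ 2 = 3 from rfl, pbcd3, pbcd2]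
  ext t
  simp only [Finset.image_insert, Finset.image_singleton, Finset.mem_union,
    Finset.mem_insert, Finset.mem_singleton]

lemma key (T T' : V → V → Bool) (hT : IsTournament T) (hT' : IsTournament T')
    (f : V → Bool) (hf : ∀ i j, i ≠ j → T' i j = (T i j != (f i != f j)))
    (s : Finset V) (hs : s.card = 4) :
    (((s.powersetCard 3).filter fun t => ∀ v ∈ t, (t.filter fun w => T' v w).card = 1).card = 1
      ↔
     ((s.powersetCard 3).filter fun t => ∀ v ∈ t, (t.filter fun w => T v w).card = 1).card = 1)
    := by
  obtain ⟨a, t, hat, rfl, ht3⟩ := Finset.card_eq_succ.mp (show _ = 3 + 1 from hs)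
  obtain ⟨b, c, d, hbc, hbd, hcd, rfl⟩ := Finset.card_eq_three.mp ht3
  have hab : a ≠ b := by rintro rfl; simp at hat
  have hac : a ≠ c := by rintro rfl; simp at hat
  have had : a ≠ d := by rintro rfl; simp at hat
  have d12 : ({b, c, d} : Finset V) ≠ {a, c, d} := by
    intro hh
    have ha : a ∈ ({b, c, d} : Finset V) := by rw [hh]; simp
    simp only [Finset.mem_insert, Finset.mem_singleton] at ha
    rcases ha with h' | h' | h' <;> [exact hab h'; exact hac h'; exact had h']
  have d13 : ({b, c, d} : Finset V) ≠ {a, b, d} := by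
    intro hh
    have ha : a ∈ ({b, c, d} : Finset V) := by rw [hh]; simp
    simp only [Finset.mem_insert, Finset.mem_singleton] at ha
    rcases ha with h' | h' | h' <;> [exact hab h'; exact hac h'; exact had h']
  have d14 : ({b, c, d} : Finset V) ≠ {a, b, c} := by
    intro hh
    have ha : a ∈ ({b, c, d} : Finset V) := by rw [hh]; simp
    simp only [Finset.mem_insert, Finset.mem_singleton] at ha
    rcases ha with h' | h' | h' <;> [exact hab h'; exact hac h'; exact had h']
  have d23 : ({a, c, d} : Finset V) ≠ {a, b, d} := by
    intro hh
    have hc : c ∈ ({a, b, d} : Finset V) := by rw [← hh]; simp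
    simp only [Finset.mem_insert, Finset.mem_singleton] at hc
    rcases hc with h' | h' | h' <;> [exact hac h'.symm; exact hbc h'.symm; exact hcd h']
  have d24 : ({a, c, d} : Finset V) ≠ {a, b, c} := by
    intro hh
    have hd' : d ∈ ({a, b, c} : Finset V) := by rw [← hh]; simp
    simp only [Finset.mem_insert, Finset.mem_singleton] at hd'
    rcases hd' with h' | h' | h' <;> [exact had h'.symm; exact hbd h'.symm; exact hcd h'.symm]
  have d34 : ({a, b, d} : Finset V) ≠ {a, b, c} := by
    intro hh
    have hd' : d ∈ ({a, b, c} : Finset V) := by rw [← hh]; simp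
    simp only [Finset.mem_insert, Finset.mem_singleton] at hd'
    rcases hd' with h' | h' | h' <;> [exact had h'.symm; exact hbd h'.symm; exact hcd h'.symm]
  rw [show insert a ({b, c, d} : Finset V) = {a, b, c, d} from rfl,
    pc3 hab hac had hbc hbd hcd,
    card_filter4 _ d12 d13 d14 d23 d24 d34, card_filter4 _ d12 d13 d14 d23 d24 d34]
  simp only [cyc_iff T hT hbc hbd hcd, cyc_iff T hT hac had hcd, cyc_iff T hT hab had hbd,
    cyc_iff T hT hab hac hbc, cyc_iff T' hT' hbc hbd hcd, cyc_iff T' hT' hac had hcd,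
    cyc_iff T' hT' hab had hbd, cyc_iff T' hT' hab hac hbc]
  rw [hf b c hbc, hf c d hcd, hf b d hbd, hf a c hac, hf a d had, hf a b hab]
  exact bool_final (T a b) (T a c) (T a d) (T b c) (T b d) (T c d) (f a) (f b) (f c) (f d)

/-- Tournaments whose Seidel adjacency matrices are `{±1}`-diagonally similar
have the same number of diamonds. -/
theorem stmt_8 {n : ℕ} (T T' : Fin n → Fin n → Bool)
    (hT : IsTournament T) (hT' : IsTournament T')
    (d : Fin n → ℤ) (hd : ∀ i, d i = 1 ∨ d i = -1)
    (h : seidel T' = Matrix.diagonal d * seidel T * Matrix.diagonal d) :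
    numDiamonds T = numDiamonds T' := by
  have hS : ∀ (U : Fin n → Fin n → Bool), IsTournament U → ∀ i j : Fin n, i ≠ j →
      seidel U i j = if U i j then 1 else -1 := by
    intro U hU i j hij
    have hji := hU.2 j i hij.symm
    simp only [seidel, adj, Matrix.sub_apply, Matrix.transpose_apply, Matrix.of_apply]
    cases h1 : U i j <;> rw [hji, h1] <;> simp
  set f : Fin n → Bool := fun i => if d i = 1 then false else true with hfdef
  have hf : ∀ i j, i ≠ j → T' i j = (T i j != (f i != f j)) := by
    intro i j hij
    have e : seidel T' i j = d i * seidel T i j * d j := by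
      rw [h, Matrix.mul_diagonal, Matrix.diagonal_mul]
    rw [hS T hT i j hij, hS T' hT' i j hij] at e
    rcases hd i with hdi | hdi <;> rcases hd j with hdj | hdj <;>
      rw [hdi, hdj] at e <;>
      cases h1 : T i j <;> cases h2 : T' i j <;> rw [h1, h2] at e <;>
      simp_all [hfdef]
  unfold numDiamonds numDiamondsOn
  exact congrArg Finset.card
    (Finset.filter_congr fun s hs =>
      (key T T' hT hT' f hf s (Finset.mem_powersetCard.mp hs).2).symm)
end

section
/- For every n-tournament T, δ_T ≤ n²(n−1)(n−2)/96, and equality holds if and only if the Seidel adjacency matrix S of T satisfies S² = (1−n)·I_n (equivalently S·Sᵀ = (n−1)·I_n, i.e. S is a skew-conference matrix). -/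
set_option linter.unusedSectionVars false
set_option linter.unnecessarySeqFocus false
set_option linter.unusedTactic false

open Finset Matrix

variable {V : Type*} [Fintype V] [DecidableEq V]

/-! ### Auxiliary material for the proof -/

namespace Stmt9Aux

/-- Distinctness of the four components of a quadruple. -/
def dcV {α : Type*} (q : α × α × α × α) : Prop :=
  q.1 ≠ q.2.1 ∧ q.1 ≠ q.2.2.1 ∧ q.1 ≠ q.2.2.2 ∧ q.2.1 ≠ q.2.2.1 ∧
    q.2.1 ≠ q.2.2.2 ∧ q.2.2.1 ≠ q.2.2.2

instance {α : Type*} [DecidableEq α] : DecidablePred (dcV (α := α)) := fun q => by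
  unfold dcV; infer_instance

/-- Seidel entry of a boolean relation. -/
def sv {α : Type*} (b : α → α → Bool) (i j : α) : ℤ :=
  (if b i j then 1 else 0) - (if b j i then 1 else 0)

lemma seidel_apply (T : V → V → Bool) (i j : V) :
    seidel T i j = sv T i j := rfl

lemma seidel_diag (T : V → V → Bool) (i : V) : seidel T i i = 0 := by
  simp [seidel_apply, sv]

lemma seidel_skew (T : V → V → Bool) (i j : V) : seidel T j i = - seidel T i j := by
  simp [seidel_apply, sv]

lemma seidel_sq {T : V → V → Bool} (hT : IsTournament T) {i j : V} (h : i ≠ j) :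
    seidel T i j * seidel T i j = 1 := by
  have h2 := hT.2 i j h
  cases hij : T i j <;> cases hji : T j i <;> rw [hij, hji] at h2 <;>
    simp_all [seidel_apply, sv]

/-- The tournament on `Fin 4` built from its six upper-triangular entries. -/
def mk4 (x01 x02 x03 x12 x13 x23 : Bool) : Fin 4 → Fin 4 → Bool := fun i j =>
  ![![false, x01, x02, x03], ![!x01, false, x12, x13],
    ![!x02, !x12, false, x23], ![!x03, !x13, !x23, false]] i j

set_option maxRecDepth 100000 in
lemma key4' : ∀ x01 x02 x03 x12 x13 x23 : Bool,
    (∑ q ∈ (univ : Finset (Fin 4 × Fin 4 × Fin 4 × Fin 4)).filter dcV,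
      sv (mk4 x01 x02 x03 x12 x13 x23) q.1 q.2.2.1 * sv (mk4 x01 x02 x03 x12 x13 x23) q.2.2.1 q.2.1 *
        (sv (mk4 x01 x02 x03 x12 x13 x23) q.1 q.2.2.2 * sv (mk4 x01 x02 x03 x12 x13 x23) q.2.2.2 q.2.1))
    = 8 - 32 * (if (((univ : Finset (Fin 4)).powersetCard 3).filter
        (fun t => ∀ v ∈ t, (t.filter fun w => mk4 x01 x02 x03 x12 x13 x23 v w).card = 1)).card = 1
        then (1:ℤ) else 0) := by
  decide

lemma eq_mk4 {b : Fin 4 → Fin 4 → Bool} (hb : IsTournament b) :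
    b = mk4 (b 0 1) (b 0 2) (b 0 3) (b 1 2) (b 1 3) (b 2 3) := by
  funext i j
  fin_cases i <;> fin_cases j <;>
    simp [mk4] <;>
    first
      | exact hb.1 _
      | (rw [hb.2 _ _ (by decide)])

lemma key4 {b : Fin 4 → Fin 4 → Bool} (hb : IsTournament b) :
    (∑ q ∈ (univ : Finset (Fin 4 × Fin 4 × Fin 4 × Fin 4)).filter dcV,
      sv b q.1 q.2.2.1 * sv b q.2.2.1 q.2.1 * (sv b q.1 q.2.2.2 * sv b q.2.2.2 q.2.1))
    = 8 - 32 * (if (((univ : Finset (Fin 4)).powersetCard 3).filter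
        (fun t => ∀ v ∈ t, (t.filter fun w => b v w).card = 1)).card = 1
        then (1:ℤ) else 0) := by
  rw [eq_mk4 hb]
  exact key4' _ _ _ _ _ _

lemma univ4 : ∀ a b c d : Fin 4, a ≠ b → a ≠ c → a ≠ d → b ≠ c → b ≠ d → c ≠ d →
    ({a, b, c, d} : Finset (Fin 4)) = univ := by decide

lemma card4 {α : Type*} [DecidableEq α] {a b c d : α} (h1 : a ≠ b) (h2 : a ≠ c)
    (h3 : a ≠ d) (h4 : b ≠ c) (h5 : b ≠ d) (h6 : c ≠ d) :
    ({a, b, c, d} : Finset α).card = 4 := by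
  rw [card_insert_of_notMem (by simp [h1, h2, h3]),
    card_insert_of_notMem (by simp [h4, h5]),
    card_insert_of_notMem (by simp [h6]), card_singleton]

/-- Sum of the squares of the off-diagonal entries of `S²`. -/
def soff (T : V → V → Bool) : ℤ :=
  ∑ i, ∑ j, if i = j then 0 else ((seidel T * seidel T) i j) ^ 2

lemma soff_nonneg (T : V → V → Bool) : 0 ≤ soff T := by
  refine Finset.sum_nonneg fun i _ => Finset.sum_nonneg fun j _ => ?_
  by_cases h : i = j <;> simp [h] <;> positivity

lemma sum_ite_ne (i : V) (c : ℤ) :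
    ∑ k : V, (if k = i then 0 else c) = ((Fintype.card V : ℤ) - 1) * c := by
  have h : ∀ k : V, (if k = i then (0:ℤ) else c) = c - (if k = i then c else 0) := by
    intro k; by_cases h : k = i <;> simp [h]
  simp_rw [h]
  rw [Finset.sum_sub_distrib, Finset.sum_const, Finset.sum_ite_eq' univ i (fun _ => c),
    if_pos (mem_univ i), card_univ]
  push_cast
  ring

lemma mul_diag {T : V → V → Bool} (hT : IsTournament T) (i : V) :
    (seidel T * seidel T) i i = 1 - (Fintype.card V : ℤ) := by
  rw [Matrix.mul_apply]
  have h : ∀ k : V, seidel T i k * seidel T k i = (if k = i then 0 else -1) := by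
    intro k
    by_cases hk : k = i
    · simp [hk, seidel_diag]
    · rw [seidel_skew T i k, mul_neg, seidel_sq hT (fun hh => hk hh.symm)]
      simp [hk]
  simp_rw [h]
  rw [sum_ite_ne]
  ring

lemma eq_char {T : V → V → Bool} (hT : IsTournament T) :
    seidel T ^ 2 = ((1:ℤ) - (Fintype.card V : ℤ)) • (1 : Matrix V V ℤ) ↔ soff T = 0 := by
  rw [pow_two]
  have hnn : ∀ i j : V, (0:ℤ) ≤ (if i = j then 0 else ((seidel T * seidel T) i j) ^ 2) := by
    intro i j; by_cases h : i = j <;> simp [h] <;> positivity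
  constructor
  · intro h
    unfold soff
    refine Finset.sum_eq_zero fun i _ => Finset.sum_eq_zero fun j _ => ?_
    by_cases hij : i = j
    · simp [hij]
    · rw [if_neg hij, h, Matrix.smul_apply, Matrix.one_apply_ne hij]
      simp
  · intro h
    ext i j
    by_cases hij : i = j
    · subst hij
      rw [mul_diag hT, Matrix.smul_apply, Matrix.one_apply_eq]
      simp
    · have h1 : ∀ i ∈ univ, (∑ j : V, if i = j then (0:ℤ) else ((seidel T * seidel T) i j) ^ 2) = 0 :=
        (Finset.sum_eq_zero_iff_of_nonneg
          (fun i _ => Finset.sum_nonneg fun j _ => hnn i j)).1 h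
      have h2 := (Finset.sum_eq_zero_iff_of_nonneg (fun j _ => hnn i j)).1
        (h1 i (mem_univ i)) j (mem_univ j)
      rw [if_neg hij] at h2
      rw [Matrix.smul_apply, Matrix.one_apply_ne hij]
      have := pow_eq_zero_iff (n := 2) (by norm_num) |>.1 h2
      simp [this]

section MainId

variable {T : V → V → Bool}

/-- Pointwise splitting of the expanded square. -/
lemma split_pointwise (hT : IsTournament T) (i j k l : V) :
    (if i = j then (0:ℤ) else seidel T i k * seidel T k j * (seidel T i l * seidel T l j))
    = (if l = k then (if i = j ∨ k = i ∨ k = j then (0:ℤ) else 1) else 0)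
      + (if dcV (i, j, k, l) then seidel T i k * seidel T k j * (seidel T i l * seidel T l j)
          else 0) := by
  unfold dcV
  simp only []
  by_cases hij : i = j
  · simp [hij]
  by_cases hki : k = i
  · subst hki
    simp [seidel_diag, hij]
  by_cases hkj : k = j
  · subst hkj
    simp [seidel_diag, hij]
  by_cases hli : l = i
  · subst hli
    have hlk' : ¬ (l = k) := fun h => hki h.symm
    simp [seidel_diag, hij, hki, hkj, hlk']
  by_cases hlj : l = j
  · subst hlj
    have hlk' : ¬ (l = k) := fun h => hkj h.symm
    simp [seidel_diag, hij, hki, hkj, hlk']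
  by_cases hlk : l = k
  · subst hlk
    have h1 := seidel_sq hT (fun h : i = l => hli h.symm)
    have h2 := seidel_sq hT (fun h : l = j => hlj h)
    simp [hij, hli, hlj]
    linear_combination (seidel T l j * seidel T l j) * h1 + h2
  · rw [if_neg hij, if_neg hlk]
    simp [hij, Ne.symm hki, Ne.symm hkj, Ne.symm hli, Ne.symm hlj, Ne.symm hlk]

lemma step1 (hT : IsTournament T) :
    soff T = (∑ i : V, ∑ j : V, ∑ k : V, if i = j ∨ k = i ∨ k = j then (0:ℤ) else 1)
      + ∑ q ∈ (univ : Finset (V × V × V × V)).filter dcV,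
          seidel T q.1 q.2.2.1 * seidel T q.2.2.1 q.2.1 *
            (seidel T q.1 q.2.2.2 * seidel T q.2.2.2 q.2.1) := by
  have expand : soff T = ∑ i : V, ∑ j : V, ∑ k : V, ∑ l : V,
      (if i = j then (0:ℤ) else seidel T i k * seidel T k j * (seidel T i l * seidel T l j)) := by
    unfold soff
    refine Finset.sum_congr rfl fun i _ => Finset.sum_congr rfl fun j _ => ?_
    by_cases h : i = j
    · simp [h]
    · simp only [if_neg h]
      rw [Matrix.mul_apply, pow_two, Finset.sum_mul_sum]
  rw [expand]
  have e2 : ∀ i j k : V, (∑ l : V,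
      (if i = j then (0:ℤ) else seidel T i k * seidel T k j * (seidel T i l * seidel T l j)))
      = (if i = j ∨ k = i ∨ k = j then (0:ℤ) else 1)
        + ∑ l : V, (if dcV (i, j, k, l) then
            seidel T i k * seidel T k j * (seidel T i l * seidel T l j) else 0) := by
    intro i j k
    calc (∑ l : V,
        (if i = j then (0:ℤ) else seidel T i k * seidel T k j * (seidel T i l * seidel T l j)))
        = ∑ l : V, ((if l = k then (if i = j ∨ k = i ∨ k = j then (0:ℤ) else 1) else 0)
          + (if dcV (i, j, k, l) then
              seidel T i k * seidel T k j * (seidel T i l * seidel T l j) else 0)) := by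
          refine Finset.sum_congr rfl fun l _ => split_pointwise hT i j k l
      _ = _ := by
          rw [Finset.sum_add_distrib,
            Finset.sum_ite_eq' univ k (fun _ => if i = j ∨ k = i ∨ k = j then (0:ℤ) else 1),
            if_pos (mem_univ k)]
  simp_rw [e2]
  rw [show ∀ A B : V → V → V → ℤ, (∑ i : V, ∑ j : V, ∑ k : V, (A i j k + B i j k))
      = (∑ i : V, ∑ j : V, ∑ k : V, A i j k) + (∑ i : V, ∑ j : V, ∑ k : V, B i j k) from
    fun A B => by simp_rw [Finset.sum_add_distrib]]
  congr 1
  rw [Finset.sum_filter, ← Finset.univ_product_univ, Finset.sum_product]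
  refine Finset.sum_congr rfl fun i _ => ?_
  rw [← Finset.univ_product_univ, Finset.sum_product]
  refine Finset.sum_congr rfl fun j _ => ?_
  rw [← Finset.univ_product_univ, Finset.sum_product]

lemma count_triples :
    (∑ i : V, ∑ j : V, ∑ k : V, if i = j ∨ k = i ∨ k = j then (0:ℤ) else 1)
      = (Fintype.card V : ℤ) * (((Fintype.card V : ℤ) - 1) * ((Fintype.card V : ℤ) - 2)) := by
  have inner : ∀ i j : V, i ≠ j →
      (∑ k : V, if i = j ∨ k = i ∨ k = j then (0:ℤ) else 1) = (Fintype.card V : ℤ) - 2 := by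
    intro i j hij
    have hpt : ∀ k : V, (if i = j ∨ k = i ∨ k = j then (0:ℤ) else 1)
        = (if k = i then 0 else 1) + (if k = j then 0 else 1) - 1 := by
      intro k
      by_cases h1 : k = i
      · subst h1
        simp [hij, fun h : k = j => hij h]
      · by_cases h2 : k = j
        · subst h2
          simp [hij, h1]
        · simp [hij, h1, h2]
    simp_rw [hpt]
    rw [Finset.sum_sub_distrib, Finset.sum_add_distrib, sum_ite_ne, sum_ite_ne,
      Finset.sum_const, card_univ]
    push_cast
    ring
  have mid : ∀ i : V, (∑ j : V, ∑ k : V, if i = j ∨ k = i ∨ k = j then (0:ℤ) else 1)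
      = ((Fintype.card V : ℤ) - 1) * ((Fintype.card V : ℤ) - 2) := by
    intro i
    have : ∀ j : V, (∑ k : V, if i = j ∨ k = i ∨ k = j then (0:ℤ) else 1)
        = (if j = i then 0 else (Fintype.card V : ℤ) - 2) := by
      intro j
      by_cases h : j = i
      · subst h; simp
      · rw [if_neg h]
        exact inner i j (fun hh => h hh.symm)
    simp_rw [this]
    rw [sum_ite_ne]
  simp_rw [mid]
  rw [Finset.sum_const, card_univ]
  push_cast
  ring

lemma step2 {T : V → V → Bool} (hT : IsTournament T) :
    (∑ q ∈ (univ : Finset (V × V × V × V)).filter dcV,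
        seidel T q.1 q.2.2.1 * seidel T q.2.2.1 q.2.1 *
          (seidel T q.1 q.2.2.2 * seidel T q.2.2.2 q.2.1))
    = ∑ s ∈ (univ : Finset V).powersetCard 4,
        (8 - 32 * (if ((s.powersetCard 3).filter fun t =>
            ∀ v ∈ t, (t.filter fun w => T v w).card = 1).card = 1 then (1:ℤ) else 0)) := by
  classical
  rw [← Finset.sum_fiberwise_of_maps_to
    (g := fun q : V × V × V × V => ({q.1, q.2.1, q.2.2.1, q.2.2.2} : Finset V))
    (t := (univ : Finset V).powersetCard 4)
    (fun q hq => by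
      obtain ⟨h1, h2, h3, h4, h5, h6⟩ := (Finset.mem_filter.1 hq).2
      exact Finset.mem_powersetCard_univ.2 (card4 h1 h2 h3 h4 h5 h6))]
  refine Finset.sum_congr rfl fun s hs => ?_
  have h4 : s.card = 4 := Finset.mem_powersetCard_univ.1 hs
  have hcard4 : Fintype.card { x // x ∈ s } = 4 := by rw [Fintype.card_coe, h4]
  set w := (Fintype.equivFinOfCardEq hcard4).symm with hw
  set v : Fin 4 → V := fun p => (w p : V) with hv'
  have hv : Function.Injective v := fun p q h => w.injective (Subtype.coe_injective h)
  have hmem : ∀ p, v p ∈ s := fun p => (w p).2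
  have hXmap : Finset.univ.map ⟨v, hv⟩ = s := by
    apply Finset.eq_of_subset_of_card_le
    · intro x hx
      obtain ⟨p, -, rfl⟩ := Finset.mem_map.1 hx
      exact hmem p
    · rw [Finset.card_map, h4]
      simp
  have hsurj : ∀ x ∈ s, ∃ p, v p = x := by
    intro x hx
    rw [← hXmap] at hx
    obtain ⟨p, -, rfl⟩ := Finset.mem_map.1 hx
    exact ⟨p, rfl⟩
  set b : Fin 4 → Fin 4 → Bool := fun p q => T (v p) (v q) with hb
  have htb : IsTournament b := ⟨fun p => hT.1 _, fun p q h => hT.2 _ _ (hv.ne h)⟩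
  set bk : V → Fin 4 := fun x => Function.invFun v x with hbk
  have hvbk : ∀ x ∈ s, v (bk x) = x := by
    intro x hx
    exact Function.invFun_eq (hsurj x hx)
  have hbkv : ∀ p, bk (v p) = p := fun p => Function.leftInverse_invFun hv p
  have hfiber : (∑ q ∈ ((univ : Finset (V × V × V × V)).filter dcV).filter
        (fun q => ({q.1, q.2.1, q.2.2.1, q.2.2.2} : Finset V) = s),
        seidel T q.1 q.2.2.1 * seidel T q.2.2.1 q.2.1 *
          (seidel T q.1 q.2.2.2 * seidel T q.2.2.2 q.2.1))
      = ∑ q ∈ (univ : Finset (Fin 4 × Fin 4 × Fin 4 × Fin 4)).filter dcV,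
          sv b q.1 q.2.2.1 * sv b q.2.2.1 q.2.1 *
            (sv b q.1 q.2.2.2 * sv b q.2.2.2 q.2.1) := by
    refine Finset.sum_nbij'
      (i := fun q : V × V × V × V => (bk q.1, bk q.2.1, bk q.2.2.1, bk q.2.2.2))
      (j := fun q : Fin 4 × Fin 4 × Fin 4 × Fin 4 => (v q.1, v q.2.1, v q.2.2.1, v q.2.2.2))
      ?_ ?_ ?_ ?_ ?_
    · intro q hq
      obtain ⟨hq1, hset⟩ := Finset.mem_filter.1 hq
      obtain ⟨h1, h2, h3, h4', h5, h6⟩ := (Finset.mem_filter.1 hq1).2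
      have m1 : q.1 ∈ s := hset ▸ (by simp)
      have m2 : q.2.1 ∈ s := hset ▸ (by simp)
      have m3 : q.2.2.1 ∈ s := hset ▸ (by simp)
      have m4 : q.2.2.2 ∈ s := hset ▸ (by simp)
      exact Finset.mem_filter.2 ⟨Finset.mem_univ _,
        fun h => h1 ((hvbk _ m1).symm.trans ((congrArg v h).trans (hvbk _ m2))),
        fun h => h2 ((hvbk _ m1).symm.trans ((congrArg v h).trans (hvbk _ m3))),
        fun h => h3 ((hvbk _ m1).symm.trans ((congrArg v h).trans (hvbk _ m4))),
        fun h => h4' ((hvbk _ m2).symm.trans ((congrArg v h).trans (hvbk _ m3))),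
        fun h => h5 ((hvbk _ m2).symm.trans ((congrArg v h).trans (hvbk _ m4))),
        fun h => h6 ((hvbk _ m3).symm.trans ((congrArg v h).trans (hvbk _ m4)))⟩
    · intro q hq
      obtain ⟨-, h1, h2, h3, h4', h5, h6⟩ := Finset.mem_filter.1 hq
      refine Finset.mem_filter.2 ⟨Finset.mem_filter.2 ⟨Finset.mem_univ _,
        hv.ne h1, hv.ne h2, hv.ne h3, hv.ne h4', hv.ne h5, hv.ne h6⟩, ?_⟩
      have huniv : ({q.1, q.2.1, q.2.2.1, q.2.2.2} : Finset (Fin 4)) = univ :=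
        univ4 _ _ _ _ h1 h2 h3 h4' h5 h6
      have : ({v q.1, v q.2.1, v q.2.2.1, v q.2.2.2} : Finset V)
          = ({q.1, q.2.1, q.2.2.1, q.2.2.2} : Finset (Fin 4)).map ⟨v, hv⟩ := by
        simp [Finset.map_insert]
      rw [this, huniv, hXmap]
    · intro q hq
      obtain ⟨hq1, hset⟩ := Finset.mem_filter.1 hq
      have m1 : q.1 ∈ s := hset ▸ (by simp)
      have m2 : q.2.1 ∈ s := hset ▸ (by simp)
      have m3 : q.2.2.1 ∈ s := hset ▸ (by simp)
      have m4 : q.2.2.2 ∈ s := hset ▸ (by simp)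
      simp only []
      rw [hvbk _ m1, hvbk _ m2, hvbk _ m3, hvbk _ m4]
    · intro q hq
      simp only []
      rw [hbkv, hbkv, hbkv, hbkv]
    · intro q hq
      obtain ⟨hq1, hset⟩ := Finset.mem_filter.1 hq
      have m1 : q.1 ∈ s := hset ▸ (by simp)
      have m2 : q.2.1 ∈ s := hset ▸ (by simp)
      have m3 : q.2.2.1 ∈ s := hset ▸ (by simp)
      have m4 : q.2.2.2 ∈ s := hset ▸ (by simp)
      simp only [seidel_apply, sv, hb]
      rw [hvbk _ m1, hvbk _ m2, hvbk _ m3, hvbk _ m4]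
  rw [hfiber, key4 htb]
  have hcount : (((univ : Finset (Fin 4)).powersetCard 3).filter
        (fun t => ∀ p ∈ t, (t.filter fun w => b p w).card = 1)).card
      = ((s.powersetCard 3).filter
          (fun t => ∀ x ∈ t, (t.filter fun w => T x w).card = 1)).card := by
    conv_rhs => rw [← hXmap]
    rw [Finset.powersetCard_map, Finset.filter_map, Finset.card_map]
    congr 1
    refine Finset.filter_congr fun t ht => ?_
    simp only [Function.comp_def, Function.comp, Finset.mapEmbedding_apply, RelEmbedding.coe_toEmbedding,
      Finset.forall_mem_map, Finset.filter_map, Finset.card_map,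
      Function.Embedding.coeFn_mk, hb]
  rw [hcount]

lemma choose_arith (m : ℕ) :
    24 * ((m.choose 4 : ℤ)) = (m : ℤ) * ((m : ℤ) - 1) * ((m : ℤ) - 2) * ((m : ℤ) - 3) := by
  have h1 : m.descFactorial 4 = 24 * m.choose 4 := by
    rw [Nat.descFactorial_eq_factorial_mul_choose]
    norm_num [Nat.factorial]
  rcases lt_or_ge m 4 with h | h
  · interval_cases m <;> norm_num [Nat.choose]
  · have h2 : ((m.descFactorial 4 : ℕ) : ℤ)
        = (m : ℤ) * ((m : ℤ) - 1) * ((m : ℤ) - 2) * ((m : ℤ) - 3) := by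
      show ((m.descFactorial (3+1) : ℕ) : ℤ) = _
      rw [Nat.descFactorial_succ, Nat.descFactorial_succ, Nat.descFactorial_succ,
        Nat.descFactorial_succ, Nat.descFactorial_zero]
      simp only [Nat.sub_zero]
      push_cast [Nat.cast_sub (show 1 ≤ m by omega), Nat.cast_sub (show 2 ≤ m by omega),
        Nat.cast_sub (show 3 ≤ m by omega)]
      ring
    rw [h1] at h2
    push_cast at h2
    linarith [h2]

lemma main_id {T : V → V → Bool} (hT : IsTournament T) :
    96 * (numDiamonds T : ℤ) + 3 * soff T
      = (Fintype.card V : ℤ) ^ 2 * ((Fintype.card V : ℤ) - 1) * ((Fintype.card V : ℤ) - 2) := by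
  have hRHS : (∑ s ∈ (univ : Finset V).powersetCard 4,
        (8 - 32 * (if ((s.powersetCard 3).filter fun t =>
            ∀ v ∈ t, (t.filter fun w => T v w).card = 1).card = 1 then (1:ℤ) else 0)))
      = 8 * ((Fintype.card V).choose 4 : ℤ) - 32 * (numDiamonds T : ℤ) := by
    rw [Finset.sum_sub_distrib, Finset.sum_const, ← Finset.mul_sum, Finset.sum_boole]
    rw [Finset.card_powersetCard, Finset.card_univ]
    unfold numDiamonds numDiamondsOn
    push_cast
    ring
  have := step1 hT
  rw [count_triples, step2 hT, hRHS] at this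
  have hch := choose_arith (Fintype.card V)
  rw [this]
  linarith [hch]

end MainId

end Stmt9Aux

/-- `δ_T ≤ n²(n−1)(n−2)/96`, with equality iff `S² = (1−n)·I_n`
(equivalently, `S` is a skew-conference matrix). -/
theorem stmt_9 {n : ℕ} (T : Fin n → Fin n → Bool) (hT : IsTournament T) :
    (numDiamonds T : ℚ) ≤ (n : ℚ)^2 * ((n : ℚ) - 1) * ((n : ℚ) - 2) / 96 ∧
      ((numDiamonds T : ℚ) = (n : ℚ)^2 * ((n : ℚ) - 1) * ((n : ℚ) - 2) / 96 ↔
        seidel T ^ 2 = ((1 : ℤ) - (n : ℤ)) • (1 : Matrix (Fin n) (Fin n) ℤ)) := by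
  have hid := Stmt9Aux.main_id hT
  rw [Fintype.card_fin] at hid
  have hnn : (0:ℤ) ≤ Stmt9Aux.soff T := Stmt9Aux.soff_nonneg T
  have hchar := Stmt9Aux.eq_char hT
  rw [Fintype.card_fin] at hchar
  have hidQ : 96 * (numDiamonds T : ℚ) + 3 * ((Stmt9Aux.soff T : ℤ) : ℚ)
      = (n:ℚ)^2 * ((n:ℚ) - 1) * ((n:ℚ) - 2) := by exact_mod_cast hid
  have hnnQ : (0:ℚ) ≤ ((Stmt9Aux.soff T : ℤ) : ℚ) := by exact_mod_cast hnn
  constructor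
  · rw [le_div_iff₀ (by norm_num : (0:ℚ) < 96)]
    linarith
  · rw [hchar]
    constructor
    · intro h
      rw [eq_div_iff (by norm_num : (96:ℚ) ≠ 0)] at h
      have h3 : ((Stmt9Aux.soff T : ℤ) : ℚ) = 0 := by linarith
      exact_mod_cast h3
    · intro h
      have h3 : ((Stmt9Aux.soff T : ℤ) : ℚ) = 0 := by exact_mod_cast h
      rw [eq_div_iff (by norm_num : (96:ℚ) ≠ 0)]
      linarith
end

section
/- Let q be a prime power with q ≡ 3 (mod 4), and let T*(q) be the tournament on the q+1 vertices F_q ∪ {∞} in which, for x, y ∈ F_q, x dominates y iff y − x is a nonzero square in F_q, and ∞ dominates every element of F_q. Then the Seidel adjacency matrix S of T*(q) satisfies S·Sᵀ = q·I_{q+1} (it is a skew-conference matrix), and consequently δ_{T*(q)} = n²(n−1)(n−2)/96 where n = q+1. -/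
open Finset Matrix

variable {V : Type*} [Fintype V] [DecidableEq V]

set_option linter.unusedSectionVars false

section AuxTournament

variable (T : V → V → Bool)

lemma s_diag (hT : IsTournament T) (i : V) : seidel T i i = 0 := by
  simp [seidel, adj, hT.1 i]

lemma s_val (hT : IsTournament T) {i j : V} (h : i ≠ j) :
    seidel T i j = if T i j then 1 else -1 := by
  have := hT.2 i j h
  simp only [seidel, adj, Matrix.sub_apply, Matrix.transpose_apply, Matrix.of_apply]
  cases hij : T i j <;> rw [hij] at this <;> simp [this]

lemma s_skew (hT : IsTournament T) (i j : V) : seidel T j i = - seidel T i j := by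
  by_cases h : i = j
  · subst h; simp [s_diag T hT]
  · rw [s_val T hT h, s_val T hT (Ne.symm h), hT.2 j i (Ne.symm h)]
    cases hij : T i j <;> simp

lemma filter_card3 {a b c : V} (hab : a ≠ b) (hac : a ≠ c) (hbc : b ≠ c) (p : V → Bool) :
    (({a,b,c} : Finset V).filter fun w => p w).card =
      (if p a then 1 else 0) + (if p b then 1 else 0) + (if p c then 1 else 0) := by
  rw [show ({a,b,c} : Finset V) = insert a (insert b {c}) from rfl]
  rw [Finset.filter_insert, Finset.filter_insert, Finset.filter_singleton]
  by_cases h1 : p a <;> by_cases h2 : p b <;> by_cases h3 : p c <;>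
    simp [h1, h2, h3, Finset.card_insert_of_notMem, Finset.mem_insert, Finset.mem_singleton,
      hab, hac, hbc]

lemma decode3 (hT : IsTournament T) {a b c : V} (hab : a ≠ b) (hac : a ≠ c) (hbc : b ≠ c) :
    (∀ v ∈ ({a,b,c} : Finset V), (({a,b,c} : Finset V).filter fun w => T v w).card = 1)
    ↔ ((T a b ∧ T b c ∧ T c a) ∨ (T b a ∧ T c b ∧ T a c)) := by
  have hma : a ∈ ({a,b,c} : Finset V) := by simp
  have hmb : b ∈ ({a,b,c} : Finset V) := by simp
  have hmc : c ∈ ({a,b,c} : Finset V) := by simp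
  have hba := hT.2 b a (Ne.symm hab)
  have hca := hT.2 c a (Ne.symm hac)
  have hcb := hT.2 c b (Ne.symm hbc)
  constructor
  · intro h
    have h1 := h a hma
    have h2 := h b hmb
    have h3 := h c hmc
    rw [filter_card3 hab hac hbc] at h1 h2 h3
    cases hx : T a b <;> cases hy : T b c <;> cases hz : T c a <;>
      simp_all [hT.1]
  · intro h v hv
    rw [filter_card3 hab hac hbc]
    simp only [Finset.mem_insert, Finset.mem_singleton] at hv
    cases hx : T a b <;> cases hy : T b c <;> cases hz : T c a <;>
      rcases hv with rfl | rfl | rfl <;>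
        simp_all [hT.1]

lemma ord6 (Q : Finset V → Prop) [DecidablePred Q] :
    ((univ ×ˢ univ ×ˢ univ : Finset (V × V × V)).filter fun p =>
      (p.1 ≠ p.2.1 ∧ p.1 ≠ p.2.2 ∧ p.2.1 ≠ p.2.2) ∧ Q {p.1, p.2.1, p.2.2}).card
    = 6 * ((univ.powersetCard 3).filter Q).card := by
  classical
  rw [Finset.card_eq_sum_card_fiberwise
    (f := fun p : V × V × V => ({p.1, p.2.1, p.2.2} : Finset V))
    (t := (univ.powersetCard 3).filter Q) ?hmap]
  case hmap =>
    rintro ⟨a, b, c⟩ hp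
    simp only [Finset.mem_coe, Finset.mem_filter, Finset.mem_powersetCard] at hp ⊢
    obtain ⟨-, ⟨h1, h2, h3⟩, hQ⟩ := hp
    refine ⟨⟨Finset.subset_univ _, ?_⟩, hQ⟩
    rw [Finset.card_insert_of_notMem (by simp [h1, h2]),
      Finset.card_insert_of_notMem (by simp [h3]), Finset.card_singleton]
  rw [Finset.sum_congr rfl (fun t ht => ?_), Finset.sum_const, smul_eq_mul, mul_comm]
  simp only [Finset.mem_filter, Finset.mem_powersetCard] at ht
  obtain ⟨⟨-, hcard3⟩, hQt⟩ := ht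
  obtain ⟨x, y, z, hxy, hxz, hyz, rfl⟩ := Finset.card_eq_three.mp hcard3
  have hset : ∀ u w r : V, ({u, w, r} : Finset V) = {x, y, z} ↔
      (u ∈ ({x,y,z} : Finset V) ∧ w ∈ ({x,y,z} : Finset V) ∧ r ∈ ({x,y,z} : Finset V) ∧
        x ∈ ({u,w,r} : Finset V) ∧ y ∈ ({u,w,r} : Finset V) ∧ z ∈ ({u,w,r} : Finset V)) := by
    intro u w r
    constructor
    · intro h
      refine ⟨?_, ?_, ?_, ?_, ?_, ?_⟩ <;> first
        | (rw [← h]; simp)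
        | (rw [h]; simp)
    · rintro ⟨h1, h2, h3, h4, h5, h6⟩
      apply Finset.Subset.antisymm <;> intro w' hw' <;>
        simp only [Finset.mem_insert, Finset.mem_singleton] at hw' <;>
        rcases hw' with rfl | rfl | rfl <;> assumption
  have key : (Finset.filter (fun p : V × V × V => ({p.1, p.2.1, p.2.2} : Finset V) = {x, y, z})
      ((univ ×ˢ univ ×ˢ univ : Finset (V × V × V)).filter fun p =>
        (p.1 ≠ p.2.1 ∧ p.1 ≠ p.2.2 ∧ p.2.1 ≠ p.2.2) ∧ Q {p.1, p.2.1, p.2.2}))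
      = ({(x,y,z),(x,z,y),(y,x,z),(y,z,x),(z,x,y),(z,y,x)} : Finset (V × V × V)) := by
    ext ⟨a, b, c⟩
    simp only [Finset.mem_filter, Finset.mem_product, Finset.mem_univ, true_and,
      Finset.mem_insert, Finset.mem_singleton, Prod.mk.injEq]
    constructor
    · rintro ⟨⟨⟨h1, h2, h3⟩, -⟩, he⟩
      rw [hset] at he
      obtain ⟨ha, hb, hc, -, -, -⟩ := he
      simp only [Finset.mem_insert, Finset.mem_singleton] at ha hb hc
      rcases ha with rfl | rfl | rfl <;> rcases hb with rfl | rfl | rfl <;>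
        rcases hc with rfl | rfl | rfl <;> simp_all
    · intro h
      have e1 : ({x,z,y} : Finset V) = {x,y,z} := by rw [hset]; simp
      have e2 : ({y,x,z} : Finset V) = {x,y,z} := by rw [hset]; simp
      have e3 : ({y,z,x} : Finset V) = {x,y,z} := by rw [hset]; simp
      have e4 : ({z,x,y} : Finset V) = {x,y,z} := by rw [hset]; simp
      have e5 : ({z,y,x} : Finset V) = {x,y,z} := by rw [hset]; simp
      rcases h with ⟨rfl, rfl, rfl⟩ | ⟨rfl, rfl, rfl⟩ | ⟨rfl, rfl, rfl⟩ | ⟨rfl, rfl, rfl⟩ |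
        ⟨rfl, rfl, rfl⟩ | ⟨rfl, rfl, rfl⟩
      · exact ⟨⟨⟨hxy, hxz, hyz⟩, hQt⟩, rfl⟩
      · exact ⟨⟨⟨hxz, hxy, Ne.symm hyz⟩, by rw [e1]; exact hQt⟩, e1⟩
      · exact ⟨⟨⟨Ne.symm hxy, hyz, hxz⟩, by rw [e2]; exact hQt⟩, e2⟩
      · exact ⟨⟨⟨hyz, Ne.symm hxy, Ne.symm hxz⟩, by rw [e3]; exact hQt⟩, e3⟩
      · exact ⟨⟨⟨Ne.symm hxz, Ne.symm hyz, hxy⟩, by rw [e4]; exact hQt⟩, e4⟩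
      · exact ⟨⟨⟨Ne.symm hyz, Ne.symm hxz, Ne.symm hxy⟩, by rw [e5]; exact hQt⟩, e5⟩
  rw [key]
  have n1 : ((x,y,z) : V×V×V) ≠ (x,z,y) := by simp [Prod.ext_iff]; tauto
  rw [Finset.card_insert_of_notMem (by simp [Prod.ext_iff]; tauto),
    Finset.card_insert_of_notMem (by simp [Prod.ext_iff]; tauto),
    Finset.card_insert_of_notMem (by simp [Prod.ext_iff]; tauto),
    Finset.card_insert_of_notMem (by simp [Prod.ext_iff]; tauto),
    Finset.card_insert_of_notMem (by simp [Prod.ext_iff]; tauto),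
    Finset.card_singleton]

lemma s_sq (hT : IsTournament T) {i j : V} (h : i ≠ j) :
    seidel T i j * seidel T i j = 1 := by
  rw [s_val T hT h]; cases hij : T i j <;> norm_num

def Efun (T : V → V → Bool) (a b c : V) : ℤ :=
  seidel T a b * seidel T b c + seidel T b c * seidel T c a + seidel T c a * seidel T a b

lemma c3_eq (hT : IsTournament T) (q : ℕ) (hcard : Fintype.card V = q + 1)
    (hS : ∀ i j : V, ∑ k, seidel T i k * seidel T j k = if i = j then (q:ℤ) else 0) :
    24 * (numC3 T : ℤ) = ((q:ℤ)+1) * q * ((q:ℤ)-1) := by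
  classical
  have hn : (Fintype.card V : ℤ) = (q:ℤ) + 1 := by rw [hcard]; push_cast; ring
  set n : ℤ := (Fintype.card V : ℤ) with hndef
  -- pointwise evaluation
  have hpt : ∀ a b c : V, a ≠ b → a ≠ c → b ≠ c →
      (1 + Efun T a b c) =
      (if (∀ v ∈ ({a,b,c} : Finset V), (({a,b,c} : Finset V).filter fun w => T v w).card = 1)
        then (4:ℤ) else 0) := by
    intro a b c hab hac hbc
    rw [if_congr (decode3 T hT hab hac hbc) rfl rfl]
    unfold Efun
    rw [s_val T hT hab, s_val T hT hbc, s_val T hT (Ne.symm hac)]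
    have hba := hT.2 b a (Ne.symm hab)
    have hcb := hT.2 c b (Ne.symm hbc)
    have hac' := hT.2 a c hac
    cases hx : T a b <;> cases hy : T b c <;> cases hz : T c a <;>
      simp_all <;> norm_num
  -- row sums
  set r : V → ℤ := fun v => ∑ w, seidel T v w with hrdef
  have hrow : ∀ k, ∑ i, seidel T i k = - r k := by
    intro k
    rw [hrdef]
    simp only
    rw [← Finset.sum_neg_distrib]
    exact Finset.sum_congr rfl fun i _ => s_skew T hT k i
  have hR : (∑ v, r v * r v) = n * q := by
    have step1 : ∑ v, r v * r v = ∑ k, (∑ i, seidel T i k) * (∑ j, seidel T j k) := by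
      refine Finset.sum_congr rfl fun k _ => ?_
      rw [hrow k]; ring
    rw [step1]
    have step2 : ∀ k : V, (∑ i, seidel T i k) * (∑ j, seidel T j k)
        = ∑ i, ∑ j, seidel T i k * seidel T j k := by
      intro k; rw [Finset.sum_mul_sum]
    rw [Finset.sum_congr rfl fun k _ => step2 k]
    rw [Finset.sum_comm]
    rw [Finset.sum_congr rfl fun i (_ : i ∈ univ) => Finset.sum_comm]
    rw [Finset.sum_congr rfl fun i (_ : i ∈ univ) =>
      Finset.sum_congr rfl fun j (_ : j ∈ univ) => hS i j]
    rw [Finset.sum_congr rfl fun i (_ : i ∈ univ) =>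
      Finset.sum_ite_eq univ i (fun _ => (q:ℤ))]
    simp [Finset.card_univ, mul_comm, hndef]
  -- cube sum of E
  have hT1 : ∑ a : V, ∑ b : V, ∑ c : V, seidel T a b * seidel T b c = - ∑ v, r v * r v := by
    have : ∀ a b : V, ∑ c : V, seidel T a b * seidel T b c = seidel T a b * r b := by
      intro a b; rw [hrdef]; simp only; rw [Finset.mul_sum]
    rw [Finset.sum_congr rfl fun a (_ : a ∈ univ) =>
      Finset.sum_congr rfl fun b (_ : b ∈ univ) => this a b]
    rw [Finset.sum_comm, ← Finset.sum_neg_distrib]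
    refine Finset.sum_congr rfl fun b _ => ?_
    rw [← Finset.sum_mul, hrow b]; ring
  have hT2 : ∑ a : V, ∑ b : V, ∑ c : V, seidel T b c * seidel T c a = - ∑ v, r v * r v := by
    have sw : ∀ a : V, ∑ b : V, ∑ c : V, seidel T b c * seidel T c a
        = ∑ c : V, ∑ b : V, seidel T b c * seidel T c a := fun a => Finset.sum_comm
    rw [Finset.sum_congr rfl fun a (_ : a ∈ univ) => sw a]
    rw [Finset.sum_comm, ← Finset.sum_neg_distrib]
    refine Finset.sum_congr rfl fun c _ => ?_
    have : ∀ a : V, ∑ b : V, seidel T b c * seidel T c a = (- r c) * seidel T c a := by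
      intro a; rw [← Finset.sum_mul, hrow c]
    rw [Finset.sum_congr rfl fun a (_ : a ∈ univ) => this a]
    rw [← Finset.mul_sum]
    rw [show (∑ a : V, seidel T c a) = r c from rfl]
    ring
  have hT3 : ∑ a : V, ∑ b : V, ∑ c : V, seidel T c a * seidel T a b = - ∑ v, r v * r v := by
    rw [← Finset.sum_neg_distrib]
    refine Finset.sum_congr rfl fun a _ => ?_
    have : ∀ b : V, ∑ c : V, seidel T c a * seidel T a b = (- r a) * seidel T a b := by
      intro b; rw [← Finset.sum_mul, hrow a]
    rw [Finset.sum_congr rfl fun b (_ : b ∈ univ) => this b]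
    rw [← Finset.mul_sum]
    rw [show (∑ b : V, seidel T a b) = r a from rfl]
    ring
  have hcube : ∑ a : V, ∑ b : V, ∑ c : V, Efun T a b c = -3 * (n * q) := by
    unfold Efun
    simp only [Finset.sum_add_distrib]
    rw [hT1, hT2, hT3, hR]; ring
  -- E on degenerate triples
  have hEaba : ∀ a b : V, a ≠ b → Efun T a b a = -1 := by
    intro a b hab
    unfold Efun
    rw [s_diag T hT, s_skew T hT a b]
    have := s_sq T hT hab
    ring_nf
    nlinarith [s_sq T hT hab]
  have hEabb : ∀ a b : V, a ≠ b → Efun T a b b = -1 := by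
    intro a b hab
    unfold Efun
    rw [s_diag T hT, s_skew T hT a b]
    nlinarith [s_sq T hT hab]
  have hEaac : ∀ a : V, ∑ c : V, Efun T a a c = -(n - 1) := by
    intro a
    have : ∀ c : V, Efun T a a c = (if c = a then 0 else -1) := by
      intro c
      by_cases hca : c = a
      · subst hca; unfold Efun; rw [s_diag T hT]; simp [if_pos rfl]
      · unfold Efun
        rw [s_diag T hT, s_skew T hT a c, if_neg hca]
        nlinarith [s_sq T hT (Ne.symm hca)]
    have h2 : ∀ c : V, (if c = a then (0:ℤ) else -1) = -1 + (if c = a then 1 else 0) := by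
      intro c; by_cases h : c = a <;> simp [h]
    rw [Finset.sum_congr rfl fun c _ => this c,
      Finset.sum_congr rfl fun c _ => h2 c]
    rw [Finset.sum_add_distrib, Finset.sum_const, Finset.sum_ite_eq' univ a (fun _ => (1:ℤ))]
    simp [Finset.card_univ, nsmul_eq_mul, hndef]
    ring
  -- inner sum over c for distinct a,b
  have inner3 : ∀ a b : V, a ≠ b →
      ∑ c : V, (if a ≠ b ∧ a ≠ c ∧ b ≠ c then 1 + Efun T a b c else 0)
      = n + ∑ c : V, Efun T a b c := by
    intro a b hab
    have hpt2 : ∀ c : V, (if a ≠ b ∧ a ≠ c ∧ b ≠ c then 1 + Efun T a b c else 0)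
        = (1 + Efun T a b c) - (if c = a then 1 + Efun T a b c else 0)
          - (if c = b then 1 + Efun T a b c else 0) := by
      intro c
      by_cases h1 : c = a
      · subst h1; simp [hab, Ne.symm hab]
      · by_cases h2 : c = b
        · subst h2; simp [hab, h1]
        · rw [if_pos ⟨hab, fun h => h1 h.symm, fun h => h2 h.symm⟩, if_neg h1, if_neg h2]
          ring
    rw [Finset.sum_congr rfl fun c _ => hpt2 c]
    rw [Finset.sum_sub_distrib, Finset.sum_sub_distrib, Finset.sum_add_distrib,
      Finset.sum_const, Finset.sum_ite_eq' univ a (fun c => 1 + Efun T a b c),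
      Finset.sum_ite_eq' univ b (fun c => 1 + Efun T a b c)]
    have e1 : 1 + Efun T a b a = 0 := by rw [hEaba a b hab]; ring
    have e2 : 1 + Efun T a b b = 0 := by rw [hEabb a b hab]; ring
    simp only [e1, e2, Finset.mem_univ, if_pos, Finset.card_univ, nsmul_eq_mul, mul_one]
    rw [← hndef]
    ring
  have hb2 : ∀ (g : V → ℤ) (a : V), (∑ b, (if b = a then 0 else g b)) = (∑ b, g b) - g a := by
    intro g a
    have : ∀ b, (if b = a then (0:ℤ) else g b) = g b - (if b = a then g b else 0) := by
      intro b; by_cases h : b = a <;> simp [h]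
    rw [Finset.sum_congr rfl fun b _ => this b, Finset.sum_sub_distrib,
      Finset.sum_ite_eq' univ a g]
    simp
  have hA2 : ∑ a : V, ∑ b : V, ∑ c : V,
      (if a ≠ b ∧ a ≠ c ∧ b ≠ c then 1 + Efun T a b c else 0)
      = n * (n * n - 1) + (-3 * (n * q)) := by
    have hb : ∀ a b : V, (∑ c : V, (if a ≠ b ∧ a ≠ c ∧ b ≠ c then 1 + Efun T a b c else 0))
        = (if b = a then 0 else n + ∑ c : V, Efun T a b c) := by
      intro a b
      by_cases h : b = a
      · subst h; simp
      · rw [if_neg h]; exact inner3 a b (fun hh => h hh.symm)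
    rw [Finset.sum_congr rfl fun a (_ : a ∈ univ) =>
      Finset.sum_congr rfl fun b (_ : b ∈ univ) => hb a b]
    rw [Finset.sum_congr rfl fun a (_ : a ∈ univ) =>
      hb2 (fun b => n + ∑ c : V, Efun T a b c) a]
    have expand : ∀ a : V, (∑ b : V, (n + ∑ c : V, Efun T a b c))
        - (n + ∑ c : V, Efun T a a c)
        = (n * n - 1) + ∑ b : V, ∑ c : V, Efun T a b c := by
      intro a
      rw [Finset.sum_add_distrib, Finset.sum_const, hEaac a]
      simp only [Finset.card_univ, nsmul_eq_mul, mul_one]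
      rw [← hndef]
      ring
    rw [Finset.sum_congr rfl fun a (_ : a ∈ univ) => expand a]
    rw [Finset.sum_add_distrib, Finset.sum_const, hcube]
    simp only [Finset.card_univ, nsmul_eq_mul]
    try rw [← hndef]
    try ring
  have hA1 : ∑ a : V, ∑ b : V, ∑ c : V,
      (if a ≠ b ∧ a ≠ c ∧ b ≠ c then 1 + Efun T a b c else 0)
      = 24 * (numC3 T : ℤ) := by
    have hpt3 : ∀ a b c : V, (if a ≠ b ∧ a ≠ c ∧ b ≠ c then 1 + Efun T a b c else 0)
        = (if (a ≠ b ∧ a ≠ c ∧ b ≠ c) ∧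
            (∀ v ∈ ({a,b,c} : Finset V), (({a,b,c} : Finset V).filter fun w => T v w).card = 1)
          then (4:ℤ) else 0) := by
      intro a b c
      by_cases hd : a ≠ b ∧ a ≠ c ∧ b ≠ c
      · rw [if_pos hd, hpt a b c hd.1 hd.2.1 hd.2.2]
        by_cases hQ : (∀ v ∈ ({a,b,c} : Finset V),
            (({a,b,c} : Finset V).filter fun w => T v w).card = 1)
        · rw [if_pos hQ, if_pos ⟨hd, hQ⟩]
        · rw [if_neg hQ, if_neg (fun h => hQ h.2)]
      · rw [if_neg hd, if_neg (fun h => hd h.1)]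
    rw [Finset.sum_congr rfl fun a (_ : a ∈ univ) =>
      Finset.sum_congr rfl fun b (_ : b ∈ univ) =>
        Finset.sum_congr rfl fun c (_ : c ∈ univ) => hpt3 a b c]
    have hprod : ∑ a : V, ∑ b : V, ∑ c : V,
        (if (a ≠ b ∧ a ≠ c ∧ b ≠ c) ∧
            (∀ v ∈ ({a,b,c} : Finset V), (({a,b,c} : Finset V).filter fun w => T v w).card = 1)
          then (4:ℤ) else 0)
        = ∑ p ∈ (univ ×ˢ univ ×ˢ univ : Finset (V × V × V)),
          (if (p.1 ≠ p.2.1 ∧ p.1 ≠ p.2.2 ∧ p.2.1 ≠ p.2.2) ∧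
              (∀ v ∈ ({p.1, p.2.1, p.2.2} : Finset V),
                (({p.1, p.2.1, p.2.2} : Finset V).filter fun w => T v w).card = 1)
            then (4:ℤ) else 0) := by
      rw [Finset.sum_product]
      refine Finset.sum_congr rfl fun a _ => ?_
      rw [Finset.sum_product]
    rw [hprod, Finset.sum_ite, Finset.sum_const, Finset.sum_const_zero, add_zero,
      nsmul_eq_mul]
    have := ord6 (V := V)
      (fun t : Finset V => ∀ v ∈ t, (t.filter fun w => T v w).card = 1)
    rw [this]
    have : numC3 T = ((univ.powersetCard 3).filter
        fun t : Finset V => ∀ v ∈ t, (t.filter fun w => T v w).card = 1).card := rfl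
    rw [← this]
    push_cast
    ring
  rw [← hA1, hA2, hn]
  ring

lemma filter_card4 {α : Type*} [DecidableEq α] {a b c d : α}
    (hab : a ≠ b) (hac : a ≠ c) (had : a ≠ d) (hbc : b ≠ c) (hbd : b ≠ d) (hcd : c ≠ d)
    (p : α → Prop) [DecidablePred p] :
    (({a,b,c,d} : Finset α).filter p).card =
      (if p a then 1 else 0) + (if p b then 1 else 0) + (if p c then 1 else 0)
        + (if p d then 1 else 0) := by
  rw [show ({a,b,c,d} : Finset α) = insert a (insert b (insert c {d})) from rfl]
  rw [Finset.filter_insert, Finset.filter_insert, Finset.filter_insert,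
    Finset.filter_singleton]
  by_cases h1 : p a <;> by_cases h2 : p b <;> by_cases h3 : p c <;> by_cases h4 : p d <;>
    simp [h1, h2, h3, h4, Finset.card_insert_of_notMem, Finset.mem_insert,
      Finset.mem_singleton, hab, hac, had, hbc, hbd, hcd]

lemma p3_insert (hT : IsTournament T) {a b c v : V}
    (hab : a ≠ b) (hac : a ≠ c) (hbc : b ≠ c) (hva : v ≠ a) (hvb : v ≠ b) (hvc : v ≠ c) :
    (insert v ({a,b,c} : Finset V)).powersetCard 3
      = ({({a,b,c} : Finset V), {v,b,c}, {v,a,b}, {v,a,c}} : Finset (Finset V)) := by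
  have hvnotin : v ∉ ({a,b,c} : Finset V) := by simp [hva, hvb, hvc]
  have hanotin : a ∉ ({b,c} : Finset V) := by simp [hab, hac]
  have hcard3 : ({a,b,c} : Finset V).card = 3 := by
    rw [Finset.card_insert_of_notMem (by simp [hab, hac]),
      Finset.card_insert_of_notMem (by simp [hbc]), Finset.card_singleton]
  have hcard2 : ({b,c} : Finset V).card = 2 := by
    rw [Finset.card_insert_of_notMem (by simp [hbc]), Finset.card_singleton]
  have key := Finset.powersetCard_succ_insert hvnotin 2
  rw [show Nat.succ 2 = 3 from rfl] at key
  rw [key]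
  have h33 : ({a,b,c} : Finset V).powersetCard 3 = {({a,b,c} : Finset V)} := by
    rw [← hcard3, Finset.powersetCard_self]
  have key2 := Finset.powersetCard_succ_insert hanotin 1
  rw [show Nat.succ 1 = 2 from rfl] at key2
  have h22 : ({b,c} : Finset V).powersetCard 2 = {({b,c} : Finset V)} := by
    rw [← hcard2, Finset.powersetCard_self]
  have h21 : ({b,c} : Finset V).powersetCard 1
      = ({({b} : Finset V), {c}} : Finset (Finset V)) := by
    rw [Finset.powersetCard_one, Finset.map_insert, Finset.map_singleton]
    rfl
  have hP2 : ({a,b,c} : Finset V).powersetCard 2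
      = ({({b,c} : Finset V), {a,b}, {a,c}} : Finset (Finset V)) := by
    rw [show ({a,b,c} : Finset V) = insert a ({b,c} : Finset V) from rfl, key2, h22, h21]
    rw [Finset.image_insert, Finset.image_singleton]
    ext u
    simp only [Finset.mem_union, Finset.mem_insert, Finset.mem_singleton]
    try tauto
  rw [h33, hP2]
  rw [Finset.image_insert, Finset.image_insert, Finset.image_singleton]
  ext u
  simp only [Finset.mem_union, Finset.mem_insert, Finset.mem_singleton]
  try tauto

lemma ne_of_mem_not_mem {α : Type*} [DecidableEq α] {s t : Finset α} {x : α}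
    (h1 : x ∈ s) (h2 : x ∉ t) : s ≠ t := fun h => h2 (h ▸ h1)

lemma ext_one_iff (hT : IsTournament T) {a b c v : V}
    (hab : a ≠ b) (hac : a ≠ c) (hbc : b ≠ c) (hva : v ≠ a) (hvb : v ≠ b) (hvc : v ≠ c)
    (hcyc : ∀ w ∈ ({a,b,c} : Finset V), (({a,b,c} : Finset V).filter fun z => T w z).card = 1) :
    (((insert v ({a,b,c} : Finset V)).powersetCard 3).filter
        fun t => ∀ w ∈ t, (t.filter fun z => T w z).card = 1).card = 1
    ↔ (T v a = T v b ∧ T v b = T v c) := by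
  classical
  rw [p3_insert T hT hab hac hbc hva hvb hvc]
  have d12 : ({a,b,c} : Finset V) ≠ {v,b,c} :=
    (ne_of_mem_not_mem (show v ∈ ({v,b,c}:Finset V) by simp)
      (show v ∉ ({a,b,c}:Finset V) by simp [hva, hvb, hvc])).symm
  have d13 : ({a,b,c} : Finset V) ≠ {v,a,b} :=
    (ne_of_mem_not_mem (show v ∈ ({v,a,b}:Finset V) by simp)
      (show v ∉ ({a,b,c}:Finset V) by simp [hva, hvb, hvc])).symm
  have d14 : ({a,b,c} : Finset V) ≠ {v,a,c} :=
    (ne_of_mem_not_mem (show v ∈ ({v,a,c}:Finset V) by simp)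
      (show v ∉ ({a,b,c}:Finset V) by simp [hva, hvb, hvc])).symm
  have d23 : ({v,b,c} : Finset V) ≠ {v,a,b} :=
    ne_of_mem_not_mem (show c ∈ ({v,b,c}:Finset V) by simp)
      (show c ∉ ({v,a,b}:Finset V) by simp [Ne.symm hvc, Ne.symm hac, Ne.symm hbc])
  have d24 : ({v,b,c} : Finset V) ≠ {v,a,c} :=
    ne_of_mem_not_mem (show b ∈ ({v,b,c}:Finset V) by simp)
      (show b ∉ ({v,a,c}:Finset V) by simp [Ne.symm hvb, Ne.symm hab, hbc])
  have d34 : ({v,a,b} : Finset V) ≠ {v,a,c} :=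
    ne_of_mem_not_mem (show b ∈ ({v,a,b}:Finset V) by simp)
      (show b ∉ ({v,a,c}:Finset V) by simp [Ne.symm hvb, Ne.symm hab, hbc])
  rw [filter_card4 d12 d13 d14 d23 d24 d34]
  rw [if_pos hcyc]
  have hd2 : (∀ w ∈ ({v,b,c} : Finset V), (({v,b,c} : Finset V).filter fun z => T w z).card = 1)
      ↔ ((T v b ∧ T b c ∧ T c v) ∨ (T b v ∧ T c b ∧ T v c)) :=
    decode3 T hT hvb hvc hbc
  have hd3 : (∀ w ∈ ({v,a,b} : Finset V), (({v,a,b} : Finset V).filter fun z => T w z).card = 1)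
      ↔ ((T v a ∧ T a b ∧ T b v) ∨ (T a v ∧ T b a ∧ T v b)) :=
    decode3 T hT hva hvb hab
  have hd4 : (∀ w ∈ ({v,a,c} : Finset V), (({v,a,c} : Finset V).filter fun z => T w z).card = 1)
      ↔ ((T v a ∧ T a c ∧ T c v) ∨ (T a v ∧ T c a ∧ T v c)) :=
    decode3 T hT hva hvc hac
  have hred : ∀ (p2 p3 p4 : Prop) (_ : Decidable p2) (_ : Decidable p3) (_ : Decidable p4),
      ((1 + (if p2 then 1 else 0) + (if p3 then 1 else 0) + (if p4 then 1 else 0) : ℕ) = 1)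
      ↔ (¬p2 ∧ ¬p3 ∧ ¬p4) := by
    intro p2 p3 p4 i2 i3 i4
    by_cases h2 : p2 <;> by_cases h3 : p3 <;> by_cases h4 : p4 <;> simp [h2, h3, h4]
  rw [hred, hd2, hd3, hd4]
  rw [decode3 T hT hab hac hbc] at hcyc
  have hba := hT.2 b a (Ne.symm hab)
  have hcb := hT.2 c b (Ne.symm hbc)
  have hac' := hT.2 a c hac
  have hav := hT.2 a v (Ne.symm hva)
  have hbv := hT.2 b v (Ne.symm hvb)
  have hcv := hT.2 c v (Ne.symm hvc)
  rcases hcyc with ⟨h1, h2, h3⟩ | ⟨h1, h2, h3⟩ <;>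
    cases hx : T v a <;> cases hy : T v b <;> cases hz : T v c <;>
      simp_all

lemma ext_count (hT : IsTournament T) (q : ℕ) (hq4 : q % 4 = 3)
    (hcard : Fintype.card V = q + 1)
    (hS : ∀ i j : V, ∑ k, seidel T i k * seidel T j k = if i = j then (q:ℤ) else 0)
    {a b c : V} (hab : a ≠ b) (hac : a ≠ c) (hbc : b ≠ c)
    (hcyc : ∀ w ∈ ({a,b,c} : Finset V), (({a,b,c} : Finset V).filter fun z => T w z).card = 1) :
    4 * (univ.filter fun v => v ∉ ({a,b,c} : Finset V)
      ∧ (T v a = T v b ∧ T v b = T v c)).card = q + 1 := by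
  classical
  set t : Finset V := {a,b,c} with htdef
  set g : V → ℤ := fun v => seidel T v a + seidel T v b + seidel T v c with hgdef
  have hg : ∀ v, g v * g v = seidel T a v * seidel T a v + seidel T b v * seidel T b v
      + seidel T c v * seidel T c v + 2 * (seidel T a v * seidel T b v)
      + 2 * (seidel T a v * seidel T c v) + 2 * (seidel T b v * seidel T c v) := by
    intro v
    rw [hgdef]
    simp only
    rw [s_skew T hT a v, s_skew T hT b v, s_skew T hT c v]
    ring
  have h3q : ∑ v, g v * g v = 3 * q := by
    rw [Finset.sum_congr rfl fun v _ => hg v]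
    simp only [Finset.sum_add_distrib, ← Finset.mul_sum]
    rw [hS a a, hS b b, hS c c, hS a b, hS a c, hS b c]
    simp [hab, hac, hbc]
    ring
  -- g vanishes on the triangle
  have hvals : True := trivial
  have sab := s_val T hT hab
  have sac := s_val T hT hac
  have sbc := s_val T hT hbc
  have sba := s_val T hT (Ne.symm hab)
  have sca := s_val T hT (Ne.symm hac)
  have scb := s_val T hT (Ne.symm hbc)
  have fba := hT.2 b a (Ne.symm hab)
  have fca := hT.2 c a (Ne.symm hac)
  have fcb := hT.2 c b (Ne.symm hbc)
  have hgt : g a = 0 ∧ g b = 0 ∧ g c = 0 := by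
    rw [decode3 T hT hab hac hbc] at hcyc
    rcases hcyc with ⟨h1, h2, h3⟩ | ⟨h1, h2, h3⟩
    · have w1 : T b a = false := by rw [fba, h1]; rfl
      have w2 : T c b = false := by rw [fcb, h2]; rfl
      have w3 : T a c = false := by
        rw [fca] at h3
        cases hw : T a c
        · rfl
        · rw [hw] at h3; exact absurd h3 (by decide)
      refine ⟨?_, ?_, ?_⟩ <;>
        simp [hgdef, s_diag T hT, sab, sac, sbc, sba, sca, scb, h1, h2, h3, w1, w2, w3]
    · have w1 : T a b = false := by
        rw [fba] at h1
        cases hw : T a b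
        · rfl
        · rw [hw] at h1; exact absurd h1 (by decide)
      have w2 : T b c = false := by
        rw [fcb] at h2
        cases hw : T b c
        · rfl
        · rw [hw] at h2; exact absurd h2 (by decide)
      have w3 : T c a = false := by rw [fca, h3]; rfl
      refine ⟨?_, ?_, ?_⟩ <;>
        simp [hgdef, s_diag T hT, sab, sac, sbc, sba, sca, scb, h1, h2, h3, w1, w2, w3]
  have hsum_t : ∑ v ∈ t, g v * g v = 0 := by
    rw [htdef]
    rw [Finset.sum_insert (by simp [hab, hac]), Finset.sum_insert (by simp [hbc]),
      Finset.sum_singleton]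
    rw [hgt.1, hgt.2.1, hgt.2.2]
    ring
  have hcompl : ∑ v ∈ tᶜ, g v * g v = 3 * q := by
    have := Finset.sum_add_sum_compl t (fun v => g v * g v)
    rw [hsum_t, zero_add] at this
    rw [this, h3q]
  -- pointwise on complement
  have hpt : ∀ v, v ∉ t → g v * g v
      = if (T v a = T v b ∧ T v b = T v c) then 9 else 1 := by
    intro v hv
    rw [htdef] at hv
    simp only [Finset.mem_insert, Finset.mem_singleton, not_or] at hv
    obtain ⟨hva, hvb, hvc⟩ := hv
    rw [hgdef]
    simp only
    rw [s_val T hT hva, s_val T hT hvb, s_val T hT hvc]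
    cases hx : T v a <;> cases hy : T v b <;> cases hz : T v c <;>
      simp [hx, hy, hz] <;> norm_num
  -- split complement by the condition
  set N := (tᶜ.filter fun v => (T v a = T v b ∧ T v b = T v c)).card with hNdef
  set M := (tᶜ.filter fun v => ¬(T v a = T v b ∧ T v b = T v c)).card with hMdef
  have hNM : N + M = q - 2 := by
    rw [hNdef, hMdef, Finset.card_filter_add_card_filter_not, Finset.card_compl]
    rw [htdef]
    rw [Finset.card_insert_of_notMem (by simp [hab, hac]),
      Finset.card_insert_of_notMem (by simp [hbc]), Finset.card_singleton, hcard]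
    omega
  have hsplit : (9 * N + M : ℤ) = 3 * q := by
    rw [← hcompl]
    rw [← Finset.sum_filter_add_sum_filter_not tᶜ
      (fun v => (T v a = T v b ∧ T v b = T v c)) (fun v => g v * g v)]
    have e1 : ∑ v ∈ tᶜ.filter (fun v => (T v a = T v b ∧ T v b = T v c)), g v * g v
        = 9 * (N : ℤ) := by
      have hpw : ∀ v ∈ tᶜ.filter (fun v => (T v a = T v b ∧ T v b = T v c)),
          g v * g v = (9:ℤ) := by
        intro v hv
        simp only [Finset.mem_filter, Finset.mem_compl] at hv
        rw [hpt v hv.1, if_pos hv.2]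
      rw [Finset.sum_congr rfl hpw, Finset.sum_const, nsmul_eq_mul]
      push_cast
      ring
    have e2 : ∑ v ∈ tᶜ.filter (fun v => ¬(T v a = T v b ∧ T v b = T v c)), g v * g v
        = (M : ℤ) := by
      have hpw : ∀ v ∈ tᶜ.filter (fun v => ¬(T v a = T v b ∧ T v b = T v c)),
          g v * g v = (1:ℤ) := by
        intro v hv
        simp only [Finset.mem_filter, Finset.mem_compl] at hv
        rw [hpt v hv.1, if_neg hv.2]
      rw [Finset.sum_congr rfl hpw, Finset.sum_const, nsmul_eq_mul]
      push_cast
      ring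
    rw [e1, e2]
  have hq3 : 3 ≤ q := by omega
  have hNval : 4 * N = q + 1 := by omega
  have hfe : (univ.filter fun v => v ∉ ({a,b,c} : Finset V)
      ∧ (T v a = T v b ∧ T v b = T v c))
      = tᶜ.filter fun v => (T v a = T v b ∧ T v b = T v c) := by
    rw [htdef]
    ext v
    simp [Finset.mem_compl, and_assoc]
  rw [hfe, ← hNdef, hNval]

lemma diamond_eq (hT : IsTournament T) (q : ℕ) (hq4 : q % 4 = 3)
    (hcard : Fintype.card V = q + 1)
    (hS : ∀ i j : V, ∑ k, seidel T i k * seidel T j k = if i = j then (q:ℤ) else 0) :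
    4 * numDiamonds T = numC3 T * (q + 1) := by
  classical
  set Cyc : Finset V → Prop :=
    fun t => ∀ v ∈ t, (t.filter fun w => T v w).card = 1 with hCyc
  set P3c : Finset (Finset V) := (univ.powersetCard 3).filter Cyc with hP3c
  set pairs : Finset (Finset V × V) :=
    (P3c ×ˢ univ).filter
      (fun p => p.2 ∉ p.1 ∧ (((insert p.2 p.1).powersetCard 3).filter Cyc).card = 1)
    with hpairs
  have hmem_pairs : ∀ p : Finset V × V, p ∈ pairs ↔
      (p.1 ⊆ univ ∧ p.1.card = 3) ∧ Cyc p.1 ∧ p.2 ∉ p.1 ∧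
        (((insert p.2 p.1).powersetCard 3).filter Cyc).card = 1 := by
    intro p
    rw [hpairs]
    simp only [Finset.mem_filter, Finset.mem_product, Finset.mem_univ, and_true, true_and,
      hP3c, Finset.mem_powersetCard]
    tauto
  -- bijection between pairs and diamonds
  have hbij : pairs.card
      = ((univ.powersetCard 4).filter fun s =>
          ((s.powersetCard 3).filter Cyc).card = 1).card := by
    refine Finset.card_bij (fun p _ => insert p.2 p.1) ?_ ?_ ?_
    · intro p hp
      rw [hmem_pairs] at hp
      obtain ⟨⟨-, hc3⟩, hcyc, hnm, hone⟩ := hp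
      simp only [Finset.mem_filter, Finset.mem_powersetCard]
      refine ⟨⟨Finset.subset_univ _, ?_⟩, hone⟩
      rw [Finset.card_insert_of_notMem hnm, hc3]
    · intro p1 hp1 p2 hp2 heq
      have heq2 : insert p1.2 p1.1 = insert p2.2 p2.1 := heq
      rw [hmem_pairs] at hp1 hp2
      obtain ⟨⟨-, hc31⟩, hcyc1, hnm1, hone1⟩ := hp1
      obtain ⟨⟨-, hc32⟩, hcyc2, hnm2, hone2⟩ := hp2
      obtain ⟨u, hu⟩ := Finset.card_eq_one.mp hone1
      have hmem1 : p1.1 ∈ ((insert p1.2 p1.1).powersetCard 3).filter Cyc := by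
        simp only [Finset.mem_filter, Finset.mem_powersetCard]
        exact ⟨⟨Finset.subset_insert _ _, hc31⟩, hcyc1⟩
      have hmem2 : p2.1 ∈ ((insert p1.2 p1.1).powersetCard 3).filter Cyc := by
        rw [heq2]
        simp only [Finset.mem_filter, Finset.mem_powersetCard]
        exact ⟨⟨Finset.subset_insert _ _, hc32⟩, hcyc2⟩
      rw [hu, Finset.mem_singleton] at hmem1 hmem2
      have hfst : p1.1 = p2.1 := hmem1.trans hmem2.symm
      have hsnd : p1.2 = p2.2 := by
        have h2 : p2.2 ∈ insert p1.2 p1.1 := by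
          rw [heq2]; exact Finset.mem_insert_self _ _
        rw [Finset.mem_insert] at h2
        rcases h2 with h | h
        · exact h.symm
        · exact absurd (hfst ▸ h) hnm2
      exact Prod.ext hfst hsnd
    · intro s hs
      simp only [Finset.mem_filter, Finset.mem_powersetCard] at hs
      obtain ⟨⟨-, hc4⟩, hone⟩ := hs
      obtain ⟨u, hu⟩ := Finset.card_eq_one.mp hone
      have humem : u ∈ (s.powersetCard 3).filter Cyc := by rw [hu]; exact Finset.mem_singleton_self u
      simp only [Finset.mem_filter, Finset.mem_powersetCard] at humem
      obtain ⟨⟨husub, huc⟩, hucyc⟩ := humem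
      have hsd : (s \ u).card = 1 := by
        rw [Finset.card_sdiff_of_subset husub, hc4, huc]
      obtain ⟨v, hv⟩ := Finset.card_eq_one.mp hsd
      have hvmem : v ∈ s \ u := by rw [hv]; exact Finset.mem_singleton_self v
      rw [Finset.mem_sdiff] at hvmem
      have hsins : s = insert v u := by
        apply Finset.Subset.antisymm
        · intro w hw
          rw [Finset.mem_insert]
          by_cases hwu : w ∈ u
          · exact Or.inr hwu
          · left
            have : w ∈ s \ u := Finset.mem_sdiff.mpr ⟨hw, hwu⟩
            rw [hv, Finset.mem_singleton] at this
            exact this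
        · intro w hw
          rw [Finset.mem_insert] at hw
          rcases hw with rfl | hw
          · exact hvmem.1
          · exact husub hw
      refine ⟨(u, v), ?_, hsins.symm⟩
      rw [hmem_pairs]
      exact ⟨⟨Finset.subset_univ _, huc⟩, hucyc, hvmem.2, by rw [← hsins]; exact hone⟩
  -- fiberwise count
  have hfib : pairs.card = ∑ t ∈ P3c,
      (univ.filter fun v => v ∉ t
        ∧ (((insert v t).powersetCard 3).filter Cyc).card = 1).card := by
    rw [Finset.card_eq_sum_card_fiberwise
      (f := fun p : Finset V × V => p.1) (t := P3c) ?_]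
    · refine Finset.sum_congr rfl fun t ht => ?_
      refine Finset.card_bij (fun p _ => p.2) ?_ ?_ ?_
      · intro p hp
        rw [Finset.mem_filter] at hp
        obtain ⟨hpp, hpt⟩ := hp
        rw [hmem_pairs] at hpp
        simp only [Finset.mem_filter, Finset.mem_univ, true_and]
        rw [hpt] at hpp
        exact ⟨hpp.2.2.1, hpp.2.2.2⟩
      · intro p1 hp1 p2 hp2 heq
        have heq2 : p1.2 = p2.2 := heq
        rw [Finset.mem_filter] at hp1 hp2
        exact Prod.ext (hp1.2.trans hp2.2.symm) heq2
      · intro v hv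
        simp only [Finset.mem_filter, Finset.mem_univ, true_and] at hv
        refine ⟨(t, v), ?_, rfl⟩
        rw [Finset.mem_filter]
        refine ⟨?_, rfl⟩
        rw [hmem_pairs]
        rw [hP3c, Finset.mem_filter, Finset.mem_powersetCard] at ht
        exact ⟨ht.1, ht.2, hv.1, hv.2⟩
    · intro p hp
      rw [Finset.mem_coe, hmem_pairs] at hp
      rw [Finset.mem_coe, hP3c, Finset.mem_filter, Finset.mem_powersetCard]
      exact ⟨hp.1, hp.2.1⟩
  -- per-fiber value
  have hper : ∀ t ∈ P3c,
      4 * (univ.filter fun v => v ∉ t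
        ∧ (((insert v t).powersetCard 3).filter Cyc).card = 1).card = q + 1 := by
    intro t ht
    rw [hP3c, Finset.mem_filter, Finset.mem_powersetCard] at ht
    obtain ⟨⟨-, hc3⟩, hcyc⟩ := ht
    obtain ⟨a, b, c, hab, hac, hbc, rfl⟩ := Finset.card_eq_three.mp hc3
    have hfilter_eq : (univ.filter fun v => v ∉ ({a,b,c} : Finset V)
          ∧ (((insert v ({a,b,c} : Finset V)).powersetCard 3).filter Cyc).card = 1)
        = (univ.filter fun v => v ∉ ({a,b,c} : Finset V)
          ∧ (T v a = T v b ∧ T v b = T v c)) := by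
      apply Finset.filter_congr
      intro v _
      constructor
      · rintro ⟨hnm, hone⟩
        refine ⟨hnm, ?_⟩
        simp only [Finset.mem_insert, Finset.mem_singleton, not_or] at hnm
        rw [← ext_one_iff T hT hab hac hbc hnm.1 hnm.2.1 hnm.2.2 hcyc]
        exact hone
      · rintro ⟨hnm, hcond⟩
        refine ⟨hnm, ?_⟩
        simp only [Finset.mem_insert, Finset.mem_singleton, not_or] at hnm
        rw [ext_one_iff T hT hab hac hbc hnm.1 hnm.2.1 hnm.2.2 hcyc]
        exact hcond
    rw [hfilter_eq]
    exact ext_count T hT q hq4 hcard hS hab hac hbc hcyc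
  have hnd : numDiamonds T = pairs.card := hbij.symm
  rw [hnd, hfib, Finset.mul_sum]
  rw [Finset.sum_congr rfl hper, Finset.sum_const, smul_eq_mul]
  rfl


end AuxTournament

section AuxChar

variable {F : Type*} [Field F] [Fintype F] [DecidableEq F]

lemma jacobi_sum (hF : ringChar F ≠ 2) {c : F} (hc : c ≠ 0) :
    ∑ w : F, quadraticChar F w * quadraticChar F (w + c) = -1 := by
  classical
  have h0 : ∑ w : F, quadraticChar F w * quadraticChar F (w + c)
      = ∑ w ∈ univ.filter (fun w : F => w ≠ 0), quadraticChar F (1 + c * w⁻¹) := by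
    rw [Finset.sum_filter]
    refine Finset.sum_congr rfl fun w _ => ?_
    by_cases hw : w ≠ 0
    · rw [if_pos hw]
      have : quadraticChar F w * quadraticChar F (w + c)
          = quadraticChar F (w * (w + c)) := (map_mul _ _ _).symm
      rw [this]
      have hw2 : w * (w + c) = w ^ 2 * (1 + c * w⁻¹) := by
        field_simp
      rw [hw2, _root_.map_mul, quadraticChar_sq_one' hw, one_mul]
    · push_neg at hw
      simp [hw]
  rw [h0]
  have h1 : ∑ w ∈ univ.filter (fun w : F => w ≠ 0), quadraticChar F (1 + c * w⁻¹)
      = ∑ u ∈ univ.filter (fun u : F => u ≠ 1), quadraticChar F u := by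
    refine Finset.sum_nbij' (fun w => 1 + c * w⁻¹) (fun u => c * (u - 1)⁻¹) ?_ ?_ ?_ ?_ ?_
    · intro w hw
      simp only [mem_filter, mem_univ, true_and] at hw ⊢
      intro h
      apply hc
      have : c * w⁻¹ = 0 := by linear_combination h
      rcases mul_eq_zero.mp this with h' | h'
      · exact h'
      · exact absurd (inv_eq_zero.mp h') hw
    · intro u hu
      simp only [mem_filter, mem_univ, true_and] at hu ⊢
      intro h
      rcases mul_eq_zero.mp h with h' | h'
      · exact hc h'
      · exact hu (sub_eq_zero.mp (inv_eq_zero.mp h'))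
    · intro w hw
      simp only [mem_filter, mem_univ, true_and] at hw
      field_simp
      try ring
      exact mul_inv_cancel₀ hc
    · intro u hu
      simp only [mem_filter, mem_univ, true_and] at hu
      have h1 : u - 1 ≠ 0 := sub_ne_zero.mpr hu
      field_simp
      ring
    · intro w hw; rfl
  rw [h1]
  have h2 : ∑ u ∈ univ.filter (fun u : F => u ≠ 1), quadraticChar F u
      = (∑ u : F, quadraticChar F u) - quadraticChar F 1 := by
    rw [← Finset.sum_erase_add _ _ (mem_univ (1:F))]
    simp [Finset.filter_ne']
  rw [h2, quadraticChar_sum_zero hF]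
  simp


theorem part1 (hq : Fintype.card F % 4 = 3)
    (T : Option F → Option F → Bool)
    (hinf1 : ∀ x : F, T none (some x) = true)
    (hinf2 : ∀ x : F, T (some x) none = false)
    (hinf3 : T none none = false)
    (hdiag : ∀ x : F, T (some x) (some x) = false)
    (hsq : ∀ x y : F, x ≠ y → (T (some x) (some y) = true ↔ IsSquare (y - x))) :
    seidel T * (seidel T)ᵀ =
      (Fintype.card F : ℤ) • (1 : Matrix (Option F) (Option F) ℤ) := by
  classical
  have hF2 : ringChar F ≠ 2 := by
    intro h
    have := FiniteField.even_card_of_char_two h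
    omega
  set χ := quadraticChar F with hχ
  have hχ1 : χ (-1) = -1 := by
    rw [hχ, quadraticChar_neg_one hF2, ZMod.χ₄_nat_eq_if_mod_four]
    have h2 : Fintype.card F % 2 = 1 := by omega
    simp [h2, hq]
  have hTχ : ∀ x y : F, x ≠ y → (T (some x) (some y) = true ↔ χ (y - x) = 1) := by
    intro x y hxy
    rw [hsq x y hxy, hχ, quadraticChar_one_iff_isSquare (sub_ne_zero.mpr (Ne.symm hxy))]
  have hval : ∀ x y : F, seidel T (some x) (some y) = χ (y - x) := by
    intro x y
    by_cases hxy : x = y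
    · subst hxy
      simp [seidel, adj, hdiag, hχ]
    · have hne : (y - x) ≠ 0 := sub_ne_zero.mpr (Ne.symm hxy)
      have hflip : χ (x - y) = - χ (y - x) := by
        have : (x - y) = (-1) * (y - x) := by ring
        rw [this, _root_.map_mul, hχ1]; ring
      rcases quadraticChar_dichotomy (F := F) hne with h1 | h1
      · have hT1 : T (some x) (some y) = true := (hTχ x y hxy).mpr h1
        have hT2 : T (some y) (some x) ≠ true := by
          intro h
          rw [hTχ y x (Ne.symm hxy), hflip, h1] at h; norm_num at h
        simp only [seidel, adj, Matrix.sub_apply, Matrix.transpose_apply, Matrix.of_apply]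
        rw [if_pos hT1, if_neg hT2, h1]; ring
      · have hT1 : T (some x) (some y) ≠ true := by
          intro h
          rw [hTχ x y hxy] at h; rw [h1] at h; norm_num at h
        have hT2 : T (some y) (some x) = true := by
          rw [hTχ y x (Ne.symm hxy), hflip, h1]; norm_num
        simp only [seidel, adj, Matrix.sub_apply, Matrix.transpose_apply, Matrix.of_apply]
        rw [if_neg hT1, if_pos hT2, h1]; ring
  have hvinf1 : ∀ x : F, seidel T none (some x) = 1 := by
    intro x; simp [seidel, adj, hinf1, hinf2]
  have hvinf2 : ∀ x : F, seidel T (some x) none = -1 := by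
    intro x; simp [seidel, adj, hinf1, hinf2]
  have hvinf3 : seidel T none none = 0 := by
    simp [seidel, adj, hinf3]
  have hshift : ∀ y : F, ∑ x : F, χ (x - y) = 0 := by
    intro y
    rw [Fintype.sum_equiv (Equiv.subRight y) (fun x => χ (x - y)) χ (fun x => rfl)]
    exact quadraticChar_sum_zero hF2
  have hsq_sum : ∑ w : F, χ w * χ w = (Fintype.card F : ℤ) - 1 := by
    have : ∀ w : F, χ w * χ w = 1 - (if w = 0 then 1 else 0) := by
      intro w
      by_cases hw : w = 0
      · simp [hw, hχ]
      · have := quadraticChar_sq_one (F := F) hw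
        rw [pow_two] at this
        rw [hχ, this]; simp [hw]
    rw [Finset.sum_congr rfl (fun w _ => this w)]
    rw [Finset.sum_sub_distrib, Finset.sum_ite_eq' univ (0:F) (fun _ => (1:ℤ))]
    simp [Finset.card_univ]
  ext i j
  rw [Matrix.mul_apply]
  simp only [Matrix.transpose_apply, Matrix.smul_apply, Matrix.one_apply, smul_eq_mul]
  match i, j with
  | none, none =>
    rw [Fintype.sum_option]
    simp only [hvinf3, hvinf1]
    simp [Finset.card_univ]
  | none, some y =>
    rw [Fintype.sum_option]
    simp only [hvinf3, hvinf1, hvinf2, hval]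
    simp [hshift y]
  | some x, none =>
    rw [Fintype.sum_option]
    simp only [hvinf3, hvinf1, hvinf2, hval]
    have : ∑ z : F, χ (z - x) * 1 = 0 := by simp [hshift x]
    simp [this, hshift x]
  | some x, some y =>
    rw [Fintype.sum_option]
    simp only [hvinf2, hval]
    by_cases hxy : x = y
    · subst hxy
      have : ∑ z : F, χ (z - x) * χ (z - x) = (Fintype.card F : ℤ) - 1 := by
        rw [Fintype.sum_equiv (Equiv.subRight x) (fun z => χ (z - x) * χ (z - x))
          (fun w => χ w * χ w) (fun z => rfl)]
        exact hsq_sum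
      rw [this]
      simp
      try ring
    · have hc : x - y ≠ 0 := sub_ne_zero.mpr hxy
      have key : ∑ z : F, χ (z - x) * χ (z - y) = -1 := by
        have : ∀ z : F, χ (z - y) = χ ((z - x) + (x - y)) := by
          intro z; congr 1; ring
        rw [Finset.sum_congr rfl (fun z _ => by rw [this z])]
        rw [Fintype.sum_equiv (Equiv.subRight x)
          (fun z => χ (z - x) * χ ((z - x) + (x - y)))
          (fun w => χ w * χ (w + (x - y))) (fun z => rfl)]
        exact jacobi_sum hF2 hc
      rw [key]
      simp [Option.some_inj, hxy]


end AuxChar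

/-- For a finite field `F` with `|F| = q ≡ 3 (mod 4)`, the tournament `T*(q)`
on `F ∪ {∞}` (where `x` dominates `y` iff `y − x` is a nonzero square, and `∞` dominates
everything) has a skew-conference Seidel matrix `S` (`S·Sᵀ = q·I`), and consequently
`δ = n²(n−1)(n−2)/96` with `n = q + 1`. -/


theorem stmt_11 (F : Type*) [Field F] [Fintype F] [DecidableEq F]
    (hq : Fintype.card F % 4 = 3)
    (T : Option F → Option F → Bool)
    (hinf1 : ∀ x : F, T none (some x) = true)
    (hinf2 : ∀ x : F, T (some x) none = false)
    (hinf3 : T none none = false)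
    (hdiag : ∀ x : F, T (some x) (some x) = false)
    (hsq : ∀ x y : F, x ≠ y → (T (some x) (some y) = true ↔ IsSquare (y - x))) :
    seidel T * (seidel T)ᵀ =
        (Fintype.card F : ℤ) • (1 : Matrix (Option F) (Option F) ℤ) ∧
      (numDiamonds T : ℚ) =
        ((Fintype.card F : ℚ) + 1)^2 * (Fintype.card F : ℚ) * ((Fintype.card F : ℚ) - 1)
          / 96 := by
  classical
  set q := Fintype.card F with hqdef
  have hM := part1 hq T hinf1 hinf2 hinf3 hdiag hsq
  refine ⟨hM, ?_⟩
  -- tournament structure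
  have hF2 : ringChar F ≠ 2 := by
    intro h
    have := FiniteField.even_card_of_char_two h
    omega
  have hTour : IsTournament T := by
    constructor
    · intro i
      match i with
      | none => exact hinf3
      | some x => exact hdiag x
    · intro i j hij
      match i, j with
      | none, none => exact absurd rfl hij
      | none, some y => rw [hinf1 y, hinf2 y]; rfl
      | some x, none => rw [hinf1 x, hinf2 x]; rfl
      | some x, some y =>
        have hxy : x ≠ y := fun h => hij (by rw [h])
        have hflip : quadraticChar F (x - y) = - quadraticChar F (y - x) := by
          have h1 : (x - y) = (-1) * (y - x) := by ring
          have hm1 : quadraticChar F (-1) = -1 := by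
            rw [quadraticChar_neg_one hF2, ZMod.χ₄_nat_eq_if_mod_four]
            have h2 : Fintype.card F % 2 = 1 := by omega
            simp [h2, hq]
            omega
          rw [h1, _root_.map_mul, hm1]; ring
        have hne : (y - x) ≠ 0 := sub_ne_zero.mpr (Ne.symm hxy)
        have hTχ1 : (T (some x) (some y) = true ↔ quadraticChar F (y - x) = 1) := by
          rw [hsq x y hxy, quadraticChar_one_iff_isSquare hne]
        have hTχ2 : (T (some y) (some x) = true ↔ quadraticChar F (x - y) = 1) := by
          rw [hsq y x (Ne.symm hxy),
            quadraticChar_one_iff_isSquare (sub_ne_zero.mpr hxy)]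
        rcases quadraticChar_dichotomy (F := F) hne with h1 | h1
        · have e1 : T (some x) (some y) = true := hTχ1.mpr h1
          have e2 : T (some y) (some x) = false := by
            cases he : T (some y) (some x)
            · rfl
            · exfalso
              have := hTχ2.mp he
              rw [hflip, h1] at this
              norm_num at this
          rw [e1, e2]; rfl
        · have e1 : T (some x) (some y) = false := by
            cases he : T (some x) (some y)
            · rfl
            · exfalso
              have := hTχ1.mp he
              rw [h1] at this
              norm_num at this
          have e2 : T (some y) (some x) = true := by
            rw [hTχ2, hflip, h1]; norm_num
          rw [e1, e2]; rfl
  -- entrywise matrix identity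
  have hS : ∀ i j : Option F, ∑ k, seidel T i k * seidel T j k
      = if i = j then (q:ℤ) else 0 := by
    intro i j
    have := congrFun (congrFun hM i) j
    rw [Matrix.mul_apply] at this
    simp only [Matrix.transpose_apply, Matrix.smul_apply, Matrix.one_apply,
      smul_eq_mul] at this
    rw [this]
    by_cases h : i = j <;> simp [h, hqdef]
  have hcard : Fintype.card (Option F) = q + 1 := by
    rw [Fintype.card_option]
  have hq4 : q % 4 = 3 := hq
  have h1 := c3_eq T hTour q hcard hS
  have h2 := diamond_eq T hTour q hq4 hcard hS
  have h1' : 24 * ((numC3 T : ℚ)) = ((q:ℚ)+1) * q * ((q:ℚ)-1) := by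
    exact_mod_cast congrArg (fun z : ℤ => (z : ℚ)) h1
  have h2' : 4 * ((numDiamonds T : ℚ)) = (numC3 T : ℚ) * ((q:ℚ)+1) := by
    exact_mod_cast congrArg (fun n : ℕ => (n : ℚ)) h2
  rw [eq_div_iff (by norm_num : (96:ℚ) ≠ 0)]
  linear_combination 24 * h2' + ((q:ℚ)+1) * h1'
end
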